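/- arXiv:2004.05295 — 2 statements merged into one kernel-verified Lean document; each statement's English description precedes it below -/
import Mathlib

section
/- A two-dimensional convex lattice polygon Δ ⊂ ℝ² containing the origin in its interior is reflexive (i.e., its polar dual Δ° = {v ∈ ℝ² : ⟨u, v⟩ ≥ −1 for all u ∈ Δ} is again a lattice polygon, meaning all its vertices lie in ℤ²) if and only if the origin is the unique lattice point in the interior of Δ. -/
/-- A point of `ℝ × ℝ` is a lattice point if both coordinates are integers. -/
def IsLatticePt (p : ℝ × ℝ) : Prop := ∃ m n : ℤ, p = ((m : ℝ), (n : ℝ))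

namespace Refl

/-- The dot product on `ℝ × ℝ`. -/
def dot (u v : ℝ × ℝ) : ℝ := u.1 * v.1 + u.2 * v.2

lemma dual_hull {S : Finset (ℝ × ℝ)} {v : ℝ × ℝ}
    (h : ∀ u ∈ S, dot u v ≥ -1) : ∀ u ∈ convexHull ℝ (S : Set (ℝ × ℝ)), dot u v ≥ -1 := by
  intro u hu
  have hconv : Convex ℝ {u : ℝ × ℝ | dot u v ≥ -1} := by
    have hlin : IsLinearMap ℝ (fun u : ℝ × ℝ => dot u v) := by
      constructor
      · intro a b; simp [dot, Prod.fst_add, Prod.snd_add]; ring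
      · intro c a; simp [dot, Prod.smul_fst, Prod.smul_snd, smul_eq_mul]; ring
    exact convex_halfSpace_ge hlin (-1)
  exact convexHull_min h hconv hu

lemma nonneg_hull {T : Finset (ℝ × ℝ)} {p : ℝ × ℝ}
    (h : ∀ t ∈ T, 0 ≤ dot p t) : ∀ v ∈ convexHull ℝ (T : Set (ℝ × ℝ)), 0 ≤ dot p v := by
  intro v hv
  have hconv : Convex ℝ {v : ℝ × ℝ | 0 ≤ dot p v} := by
    have hlin : IsLinearMap ℝ (fun v : ℝ × ℝ => dot p v) := by
      constructor
      · intro a b; simp [dot, Prod.fst_add, Prod.snd_add]; ring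
      · intro c a; simp [dot, Prod.smul_fst, Prod.smul_snd, smul_eq_mul]; ring
    exact convex_halfSpace_ge hlin 0
  exact convexHull_min (fun t ht => h t ht) hconv hv

lemma dot_int {p q : ℝ × ℝ} (hp : IsLatticePt p) (hq : IsLatticePt q) :
    ∃ k : ℤ, dot p q = (k : ℝ) := by
  obtain ⟨m, n, rfl⟩ := hp
  obtain ⟨a, b, rfl⟩ := hq
  exact ⟨m * a + n * b, by push_cast [dot]; ring⟩

/-- combination with small positive total weight is interior -/

lemma interior_comb {Δ : Set (ℝ × ℝ)} (hconv : Convex ℝ Δ) (h0 : (0 : ℝ × ℝ) ∈ interior Δ)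
    {z1 z2 : ℝ × ℝ} (hz1 : z1 ∈ Δ) (hz2 : z2 ∈ Δ) {a b : ℝ} (ha : 0 ≤ a) (hb : 0 ≤ b)
    (hpos : 0 < a + b) (hlt : a + b < 1) : a • z1 + b • z2 ∈ interior Δ := by
  set s := a + b with hs
  have hz : (a / s) • z1 + (b / s) • z2 ∈ Δ :=
    hconv hz1 hz2 (div_nonneg ha hpos.le) (div_nonneg hb hpos.le) (by field_simp; linarith)
  have key := hconv.combo_interior_self_mem_interior h0 hz (by linarith : (0:ℝ) < 1 - s)
    hpos.le (by ring)
  have : (1 - s) • (0 : ℝ × ℝ) + s • ((a / s) • z1 + (b / s) • z2) = a • z1 + b • z2 := by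
    rw [smul_zero, zero_add, smul_add, smul_smul, smul_smul,
      mul_div_cancel₀ _ hpos.ne', mul_div_cancel₀ _ hpos.ne']
  rwa [this] at key

lemma forward (S : Finset (ℝ × ℝ)) (Δ : Set (ℝ × ℝ))
    (hΔ : Δ = convexHull ℝ (S : Set (ℝ × ℝ))) (h0 : (0 : ℝ × ℝ) ∈ interior Δ)
    (T : Finset (ℝ × ℝ)) (hT : ∀ p ∈ T, IsLatticePt p)
    (hTd : {v : ℝ × ℝ | ∀ u ∈ Δ, dot u v ≥ -1} = convexHull ℝ (T : Set (ℝ × ℝ))) :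
    {p ∈ interior Δ | IsLatticePt p} = {(0 : ℝ × ℝ)} := by
  ext p
  simp only [Set.mem_setOf_eq, Set.mem_singleton_iff]
  constructor
  · rintro ⟨hpint, hpl⟩
    -- boundedness of Δ
    obtain ⟨R, hR0, hRs⟩ : ∃ R, 0 < R ∧ Δ ⊆ Metric.closedBall 0 R := by
      obtain ⟨R, hR0, hRs⟩ :=
        ((S.finite_toSet.isCompact_convexHull ℝ).isBounded).subset_closedBall_lt 0 0
      exact ⟨R, hR0, by rw [hΔ]; exact hRs⟩
    -- a slightly scaled p is still in Δ
    obtain ⟨r, hr, hball⟩ : ∃ r > 0, Metric.ball p r ⊆ Δ := by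
      rw [mem_interior_iff_mem_nhds] at hpint
      exact Metric.mem_nhds_iff.mp hpint
    set ε : ℝ := r / (2 * (‖p‖ + 1)) with hε
    have hnp : (0:ℝ) ≤ ‖p‖ := norm_nonneg p
    have hεpos : 0 < ε := by positivity
    have hεΔ : (1 + ε) • p ∈ Δ := by
      apply hball
      rw [Metric.mem_ball]
      have : dist ((1 + ε) • p) p = ε * ‖p‖ := by
        rw [dist_eq_norm]
        have : (1 + ε) • p - p = ε • p := by
          rw [add_smul, one_smul]; abel
        rw [this, norm_smul, Real.norm_eq_abs, abs_of_pos hεpos]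
      rw [this, hε]
      rw [div_mul_eq_mul_div, div_lt_iff₀ (by positivity)]
      nlinarith
    -- dot p t ≥ 0 for all t in T
    have step1 : ∀ t ∈ T, 0 ≤ dot p t := by
      intro t ht
      have htK : t ∈ {v : ℝ × ℝ | ∀ u ∈ Δ, dot u v ≥ -1} := by
        rw [hTd]; exact subset_convexHull ℝ (T : Set (ℝ × ℝ)) ht
      have h1 : dot ((1 + ε) • p) t ≥ -1 := htK _ hεΔ
      have h2 : dot ((1 + ε) • p) t = (1 + ε) * dot p t := by
        simp only [dot, Prod.smul_fst, Prod.smul_snd, smul_eq_mul]; ring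
      obtain ⟨k, hk⟩ := dot_int hpl (hT t ht)
      rw [h2, hk] at h1
      rw [hk]
      by_contra hneg
      push_neg at hneg
      have hk1 : (k : ℝ) ≤ -1 := by
        have h' : k < 0 := by exact_mod_cast hneg
        have h'' : k ≤ -1 := by omega
        calc (k:ℝ) ≤ ((-1 : ℤ) : ℝ) := by exact_mod_cast h''
          _ = -1 := by norm_num
      nlinarith
    have step2 := nonneg_hull step1
    -- small negative multiple of p is in the dual
    set δ : ℝ := 1 / (R * (|p.1| + |p.2|) + 1) with hδdef
    have hδ : 0 < δ := by positivity
    have hmem : (-δ) • p ∈ {v : ℝ × ℝ | ∀ u ∈ Δ, dot u v ≥ -1} := by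
      intro u hu
      have hub : ‖u‖ ≤ R := by
        have := hRs hu
        rwa [Metric.mem_closedBall, dist_zero_right] at this
      have h1 : |u.1| ≤ R := le_trans (norm_fst_le u) hub
      have h2 : |u.2| ≤ R := le_trans (norm_snd_le u) hub
      have hd : dot u ((-δ) • p) = -δ * dot u p := by
        simp only [dot, Prod.smul_fst, Prod.smul_snd, smul_eq_mul]; ring
      rw [hd]
      have hb1 : dot u p ≤ R * (|p.1| + |p.2|) := by
        have e1 : u.1 * p.1 ≤ |u.1| * |p.1| := le_trans (le_abs_self _) (abs_mul _ _).le
        have e2 : u.2 * p.2 ≤ |u.2| * |p.2| := le_trans (le_abs_self _) (abs_mul _ _).le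
        have f1 : |u.1| * |p.1| ≤ R * |p.1| :=
          mul_le_mul_of_nonneg_right h1 (abs_nonneg _)
        have f2 : |u.2| * |p.2| ≤ R * |p.2| :=
          mul_le_mul_of_nonneg_right h2 (abs_nonneg _)
        simp only [dot]; nlinarith
      have hδb : δ * (R * (|p.1| + |p.2|)) ≤ 1 := by
        rw [hδdef]
        rw [div_mul_eq_mul_div, one_mul, div_le_one (by positivity)]
        linarith
      nlinarith
    have hfin := step2 _ (by rw [← hTd]; exact hmem)
    have : dot p ((-δ) • p) = -δ * (p.1 ^ 2 + p.2 ^ 2) := by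
      simp only [dot, Prod.smul_fst, Prod.smul_snd, smul_eq_mul]; ring
    rw [this] at hfin
    have hsq : p.1 ^ 2 + p.2 ^ 2 ≤ 0 := by nlinarith
    have h1 : p.1 = 0 := by nlinarith [sq_nonneg p.1, sq_nonneg p.2]
    have h2 : p.2 = 0 := by nlinarith [sq_nonneg p.1, sq_nonneg p.2]
    exact Prod.ext h1 h2
  · rintro rfl
    exact ⟨h0, 0, 0, by ext <;> simp⟩

lemma exists_tight_pair (S : Finset (ℝ × ℝ)) (w : ℝ × ℝ)
    (hw : w ∈ Set.extremePoints ℝ {v : ℝ × ℝ | ∀ u ∈ S, dot u v ≥ -1}) :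
    ∃ u1 ∈ S, ∃ u2 ∈ S, dot u1 w = -1 ∧ dot u2 w = -1 ∧
      u1.1 * u2.2 - u1.2 * u2.1 ≠ 0 := by
  obtain ⟨hwK, hext⟩ := hw
  by_contra hcon
  push_neg at hcon
  -- a direction d orthogonal to all tight constraints
  have hd : ∃ d : ℝ × ℝ, d ≠ 0 ∧ ∀ u ∈ S, dot u w = -1 → dot u d = 0 := by
    by_cases hA : ∃ u0 ∈ S, dot u0 w = -1
    · obtain ⟨u0, hu0S, hu0t⟩ := hA
      have hu0ne : u0 ≠ 0 := by
        intro h; rw [h] at hu0t; simp [dot] at hu0t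
      refine ⟨(-u0.2, u0.1), ?_, ?_⟩
      · intro h
        rw [Prod.ext_iff] at h
        simp only [Prod.fst_zero, Prod.snd_zero, neg_eq_zero] at h
        exact hu0ne (Prod.ext h.2 h.1)
      · intro u huS hut
        have hdet := hcon u huS u0 hu0S hut hu0t
        simp only [dot]
        linarith
    · push_neg at hA
      exact ⟨(1, 0), by simp [Prod.ext_iff], fun u huS hut => absurd hut (hA u huS)⟩
  obtain ⟨d, hdne, hdperp⟩ := hd
  -- find a uniform small t > 0
  have hslack : ∀ u ∈ S, 0 ≤ dot u w + 1 := by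
    intro u huS; have := hwK u huS; linarith
  have ht : ∃ t > 0, ∀ u ∈ S, t * |dot u d| ≤ dot u w + 1 := by
    classical
    set f : (ℝ × ℝ) → ℝ := fun u => if dot u d = 0 then 1 else (dot u w + 1) / |dot u d|
      with hf
    set F : Finset ℝ := insert (1 : ℝ) (S.image f) with hF
    have hFne : F.Nonempty := ⟨1, Finset.mem_insert_self _ _⟩
    have hpos : ∀ x ∈ F, 0 < x := by
      intro x hx
      rw [hF, Finset.mem_insert] at hx
      rcases hx with rfl | hx
      · norm_num
      · obtain ⟨u, huS, rfl⟩ := Finset.mem_image.mp hx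
        rw [hf]
        by_cases h0 : dot u d = 0
        · simp [h0]
        · simp only [h0, if_false]
          have hnt : dot u w ≠ -1 := fun h => h0 (hdperp u huS h)
          have : 0 < dot u w + 1 := lt_of_le_of_ne (hslack u huS) (by
            intro h; apply hnt; linarith)
          exact div_pos this (abs_pos.mpr h0)
    refine ⟨F.min' hFne, (Finset.lt_min'_iff F hFne).mpr (fun b hb => hpos b hb), ?_⟩
    intro u huS
    by_cases h0 : dot u d = 0
    · rw [h0, abs_zero, mul_zero]; exact hslack u huS
    · have hle : F.min' hFne ≤ f u :=
        Finset.min'_le F _ (Finset.mem_insert_of_mem (Finset.mem_image_of_mem f huS))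
      rw [hf] at hle
      simp only [h0, if_false] at hle
      rw [← le_div_iff₀ (abs_pos.mpr h0)]
      exact hle
  obtain ⟨t, htpos, htle⟩ := ht
  -- w ± t d are in K
  have hmem : ∀ s : ℝ, |s| ≤ t → w + s • d ∈ {v : ℝ × ℝ | ∀ u ∈ S, dot u v ≥ -1} := by
    intro s hs u huS
    have hexp : dot u (w + s • d) = dot u w + s * dot u d := by
      simp only [dot, Prod.fst_add, Prod.snd_add, Prod.smul_fst, Prod.smul_snd, smul_eq_mul]
      ring
    rw [hexp]
    have h1 : |s * dot u d| ≤ t * |dot u d| := by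
      rw [abs_mul]
      exact mul_le_mul_of_nonneg_right hs (abs_nonneg _)
    have h2 := htle u huS
    have h3 := (abs_le.mp (h1.trans h2)).1
    linarith
  have hp : w + t • d ∈ {v : ℝ × ℝ | ∀ u ∈ S, dot u v ≥ -1} :=
    hmem t (by rw [abs_of_pos htpos])
  have hm : w + (-t) • d ∈ {v : ℝ × ℝ | ∀ u ∈ S, dot u v ≥ -1} :=
    hmem (-t) (by rw [abs_neg, abs_of_pos htpos])
  have hseg : w ∈ openSegment ℝ (w + t • d) (w + (-t) • d) := by
    refine ⟨1/2, 1/2, by norm_num, by norm_num, by norm_num, ?_⟩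
    module
  have := hext hp hm hseg
  have htd : t • d = 0 := by
    have : w + t • d - w = 0 := by rw [this]; abel
    rwa [add_sub_cancel_left] at this
  rcases smul_eq_zero.mp htd with h | h
  · exact absurd h htpos.ne'
  · exact hdne h

lemma extreme_lattice (S : Finset (ℝ × ℝ)) (hS : ∀ p ∈ S, IsLatticePt p)
    (Δ : Set (ℝ × ℝ)) (hΔ : Δ = convexHull ℝ (S : Set (ℝ × ℝ)))
    (h0 : (0 : ℝ × ℝ) ∈ interior Δ)
    (huniq : {p ∈ interior Δ | IsLatticePt p} = {(0 : ℝ × ℝ)})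
    (w : ℝ × ℝ)
    (hpair : ∃ u1 ∈ S, ∃ u2 ∈ S, dot u1 w = -1 ∧ dot u2 w = -1 ∧
      u1.1 * u2.2 - u1.2 * u2.1 ≠ 0) :
    IsLatticePt w := by
  obtain ⟨u1, hu1S, u2, hu2S, ht1, ht2, hdet⟩ := hpair
  obtain ⟨m1, n1, hu1⟩ := hS u1 hu1S
  obtain ⟨m2, n2, hu2⟩ := hS u2 hu2S
  have ht1' : (m1:ℝ) * w.1 + (n1:ℝ) * w.2 = -1 := by rw [hu1] at ht1; simpa [dot] using ht1
  have ht2' : (m2:ℝ) * w.1 + (n2:ℝ) * w.2 = -1 := by rw [hu2] at ht2; simpa [dot] using ht2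
  set D : ℤ := m1 * n2 - n1 * m2 with hDdef
  have hDcast : ((D:ℤ):ℝ) = (m1:ℝ) * n2 - (n1:ℝ) * m2 := by rw [hDdef]; push_cast; ring
  have hDR : ((D:ℤ):ℝ) ≠ 0 := by
    rw [hu1, hu2] at hdet; rw [hDcast]; simpa using hdet
  have hD : D ≠ 0 := fun h => hDR (by rw [h]; norm_num)
  have hW1 : (D:ℝ) * w.1 = (n1:ℝ) - n2 := by
    rw [hDcast]; linear_combination n2 * ht1' - n1 * ht2'
  have hW2 : (D:ℝ) * w.2 = (m2:ℝ) - m1 := by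
    rw [hDcast]; linear_combination m1 * ht2' - m2 * ht1'
  set a0 : ℤ := n1 - n2 with ha0
  set b0 : ℤ := m2 - m1 with hb0
  have hab : a0 ≠ 0 ∨ b0 ≠ 0 := by
    by_contra hcon
    push_neg at hcon
    have hn : n1 = n2 := by have := hcon.1; rw [ha0, sub_eq_zero] at this; exact this
    have hm : m2 = m1 := by have := hcon.2; rw [hb0, sub_eq_zero] at this; exact this
    have hw1 : w.1 = 0 := by
      have : (D:ℝ) * w.1 = 0 := by rw [hW1, hn]; ring
      exact (mul_eq_zero.mp this).resolve_left hDR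
    have hw2 : w.2 = 0 := by
      have : (D:ℝ) * w.2 = 0 := by rw [hW2, hm]; ring
      exact (mul_eq_zero.mp this).resolve_left hDR
    rw [hw1, hw2] at ht1'
    norm_num at ht1'
  set g : ℕ := Int.gcd a0 b0 with hg
  have hgpos : 0 < g := Int.gcd_pos_iff.mpr hab
  have hgR : ((g:ℤ):ℝ) ≠ 0 := by exact_mod_cast Nat.cast_ne_zero.mpr hgpos.ne'
  set a1 : ℤ := a0 / g with ha1
  set b1 : ℤ := b0 / g with hb1
  have ha0e : a0 = g * a1 := (Int.mul_ediv_cancel' (Int.gcd_dvd_left _ _)).symm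
  have hb0e : b0 = g * b1 := (Int.mul_ediv_cancel' (Int.gcd_dvd_right _ _)).symm
  have haR : (n1:ℝ) - n2 = (g:ℝ) * a1 := by
    have : ((a0:ℤ):ℝ) = (((g:ℤ) * a1 : ℤ):ℝ) := by exact_mod_cast congrArg (Int.cast : ℤ → ℝ) ha0e
    rw [ha0] at this; push_cast at this ⊢; linarith
  have hbR : (m2:ℝ) - m1 = (g:ℝ) * b1 := by
    have : ((b0:ℤ):ℝ) = (((g:ℤ) * b1 : ℤ):ℝ) := by exact_mod_cast congrArg (Int.cast : ℤ → ℝ) hb0e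
    rw [hb0] at this; push_cast at this ⊢; linarith
  have e1 : (D:ℝ) * w.1 = (g:ℝ) * a1 := hW1.trans haR
  have e2 : (D:ℝ) * w.2 = (g:ℝ) * b1 := hW2.trans hbR
  have hgcd1 : Int.gcd a1 b1 = 1 := Int.gcd_div_gcd_div_gcd hgpos
  set c : ℤ := m1 * a1 + n1 * b1 with hc
  have hgc : (g:ℤ) * c = -D := by
    have hr : ((g:ℤ):ℝ) * c = ((-D : ℤ) : ℝ) := by
      rw [hc]; push_cast
      linear_combination -(m1:ℝ) * e1 - (n1:ℝ) * e2 + (D:ℝ) * ht1'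
    exact_mod_cast hr
  have hc2 : m2 * a1 + n2 * b1 = c := by
    have hr2 : (g:ℤ) * (m2 * a1 + n2 * b1) = -D := by
      have hr : ((g:ℤ):ℝ) * ((m2 * a1 + n2 * b1 : ℤ):ℝ) = ((-D : ℤ) : ℝ) := by
        push_cast
        linear_combination -(m2:ℝ) * e1 - (n2:ℝ) * e2 + (D:ℝ) * ht2'
      exact_mod_cast hr
    have := hr2.trans hgc.symm
    exact mul_left_cancel₀ (by exact_mod_cast Nat.cast_ne_zero.mpr hgpos.ne' : (g:ℤ) ≠ 0) this
  have hcne : c ≠ 0 := by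
    intro h; rw [h, mul_zero] at hgc; exact hD (by omega)
  -- sign normalization
  set e : ℤ := if 0 < c then 1 else -1 with he
  set A : ℤ := e * a1 with hA
  set B : ℤ := e * b1 with hB
  set h : ℤ := e * c with hh
  have hhpos : 0 < h := by
    rw [hh, he]
    rcases lt_trichotomy c 0 with h' | h' | h'
    · simp [not_lt.mpr h'.le, h'.ne]; nlinarith
    · exact absurd h' hcne
    · simp [h']
  have hF1 : A * m1 + B * n1 = h := by rw [hA, hB, hh, hc]; ring
  have hF2 : A * m2 + B * n2 = h := by rw [hA, hB, hh, ← hc2]; ring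
  have hABcop : Int.gcd A B = 1 := by
    rw [hA, hB, he]
    rcases lt_or_ge 0 c with h' | h'
    · simpa [h'] using hgcd1
    · simp only [not_lt.mpr h', if_neg (not_lt.mpr h')]
      simpa using hgcd1
  -- w = -(1/h) • (A, B)
  have hwA : (h:ℝ) * w.1 = -A := by
    have hDe : (D:ℝ) = -((g:ℤ):ℝ) * c := by
      have : ((g:ℤ) * c : ℝ) = ((-D : ℤ) : ℝ) := by exact_mod_cast congrArg (Int.cast : ℤ → ℝ) hgc
      push_cast at this ⊢
      linarith
    have e1' := e1
    rw [hDe] at e1'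
    have hcw : (c:ℝ) * w.1 = -a1 := by
      have hgR' : (g:ℝ) ≠ 0 := by exact_mod_cast hgR
      have hmul : (g:ℝ) * (-((c:ℝ) * w.1)) = (g:ℝ) * a1 := by linear_combination e1'
      have := mul_left_cancel₀ hgR' hmul
      linarith
    rw [hh, hA]
    push_cast
    linear_combination (e:ℝ) * hcw
  have hwB : (h:ℝ) * w.2 = -B := by
    have hDe : (D:ℝ) = -((g:ℤ):ℝ) * c := by
      have : ((g:ℤ) * c : ℝ) = ((-D : ℤ) : ℝ) := by exact_mod_cast congrArg (Int.cast : ℤ → ℝ) hgc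
      push_cast at this ⊢
      linarith
    have e2' := e2
    rw [hDe] at e2'
    have hcw : (c:ℝ) * w.2 = -b1 := by
      have hgR' : (g:ℝ) ≠ 0 := by exact_mod_cast hgR
      have hmul : (g:ℝ) * (-((c:ℝ) * w.2)) = (g:ℝ) * b1 := by linear_combination e2'
      have := mul_left_cancel₀ hgR' hmul
      linarith
    rw [hh, hB]
    push_cast
    linear_combination (e:ℝ) * hcw
  -- case h = 1
  by_cases hone : h = 1
  · refine ⟨-A, -B, ?_⟩
    rw [hone] at hwA hwB
    push_cast at hwA hwB
    have h1 : w.1 = -(A:ℝ) := by linarith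
    have h2 : w.2 = -(B:ℝ) := by linarith
    rw [Prod.ext_iff]
    constructor <;> simp [h1, h2]
  -- case h ≥ 2
  have h2 : 2 ≤ h := by omega
  exfalso
  -- Bezout
  obtain ⟨x, y, hxy⟩ : ∃ x y : ℤ, A * x + B * y = 1 := by
    obtain ⟨u, v, huv⟩ := Int.isCoprime_iff_gcd_eq_one.mpr hABcop
    exact ⟨u, v, by linear_combination huv⟩
  -- express q = (x,y) in the basis u1, u2
  set α : ℝ := ((x:ℝ) * n2 - (y:ℝ) * m2) / D with hα
  set β : ℝ := ((m1:ℝ) * y - (n1:ℝ) * x) / D with hβ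
  have hq1 : α * m1 + β * m2 = (x:ℝ) := by
    rw [hα, hβ]; field_simp; linear_combination -(x:ℝ) * hDcast
  have hq2 : α * n1 + β * n2 = (y:ℝ) := by
    rw [hα, hβ]; field_simp; linear_combination -(y:ℝ) * hDcast
  set k1 : ℤ := ⌊α⌋ with hk1
  set k2 : ℤ := ⌊β⌋ with hk2
  set sa : ℝ := Int.fract α with hsa
  set sb : ℝ := Int.fract β with hsb
  have hfa : sa = α - (k1:ℝ) := by rw [hsa, hk1, Int.self_sub_floor]
  have hfb : sb = β - (k2:ℝ) := by rw [hsb, hk2, Int.self_sub_floor]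
  set pZ1 : ℤ := x - k1 * m1 - k2 * m2 with hpZ1
  set pZ2 : ℤ := y - k1 * n1 - k2 * n2 with hpZ2
  have hp1 : (pZ1:ℝ) = sa * m1 + sb * m2 := by
    rw [hpZ1, hfa, hfb]; push_cast; linear_combination -hq1
  have hp2 : (pZ2:ℝ) = sa * n1 + sb * n2 := by
    rw [hpZ2, hfa, hfb]; push_cast; linear_combination -hq2
  set k : ℤ := k1 + k2 with hkdef
  have hdotp : A * pZ1 + B * pZ2 = 1 - k * h := by
    rw [hpZ1, hpZ2, hkdef]; linear_combination hxy - k1 * hF1 - k2 * hF2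
  -- real version
  have hF1R : (A:ℝ) * m1 + (B:ℝ) * n1 = (h:ℝ) := by exact_mod_cast hF1
  have hF2R : (A:ℝ) * m2 + (B:ℝ) * n2 = (h:ℝ) := by exact_mod_cast hF2
  have hdotR : (A:ℝ) * pZ1 + (B:ℝ) * pZ2 = 1 - (k:ℝ) * h := by exact_mod_cast hdotp
  have hsh : (sa + sb) * (h:ℝ) = 1 - (k:ℝ) * h := by
    linear_combination hdotR - (A:ℝ) * hp1 - (B:ℝ) * hp2 - sa * hF1R - sb * hF2R
  -- bounds on k
  have hsa0 : 0 ≤ sa := Int.fract_nonneg α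
  have hsb0 : 0 ≤ sb := Int.fract_nonneg β
  have hsa1 : sa < 1 := Int.fract_lt_one α
  have hsb1 : sb < 1 := Int.fract_lt_one β
  have hhR : (2:ℝ) ≤ (h:ℝ) := by exact_mod_cast h2
  have hh0 : (0:ℝ) < h := by linarith
  have hk01 : k = 0 ∨ k = -1 := by
    have hle : (k:ℝ) * h ≤ 1 := by
      have h1 : 0 ≤ (sa + sb) * (h:ℝ) := mul_nonneg (by linarith) hh0.le
      linarith
    have hgt : (1:ℝ) - 2 * h < (k:ℝ) * h := by
      have h1 : (sa + sb) * (h:ℝ) < 2 * h :=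
        (mul_lt_mul_of_pos_right (show sa + sb < 2 by linarith) hh0).trans_le (by linarith)
      linarith
    have hleZ : k * h ≤ 1 := by exact_mod_cast hle
    have hgtZ : 1 - 2 * h < k * h := by exact_mod_cast hgt
    have hk0 : k ≤ 0 := by
      by_contra hcon
      push_neg at hcon
      have : h ≤ k * h := le_mul_of_one_le_left (by omega) hcon
      omega
    have hkm : -1 ≤ k := by
      by_contra hcon
      push_neg at hcon
      have : k * h ≤ -2 * h := mul_le_mul_of_nonneg_right (by omega) (by omega)
      omega
    omega
  have hΔconv : Convex ℝ Δ := hΔ ▸ convex_convexHull ℝ _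
  have hu1Δ : u1 ∈ Δ := hΔ ▸ subset_convexHull ℝ _ hu1S
  have hu2Δ : u2 ∈ Δ := hΔ ▸ subset_convexHull ℝ _ hu2S
  rcases hk01 with hk | hk
  · -- k = 0: p is a nonzero interior lattice point
    have hsum : (sa + sb) * (h:ℝ) = 1 := by
      rw [hk] at hsh; push_cast at hsh; linarith
    have hspos : 0 < sa + sb := by
      by_contra hcon
      push_neg at hcon
      have h1 : (sa + sb) * (h:ℝ) ≤ 0 * h := mul_le_mul_of_nonneg_right hcon hh0.le
      rw [hsum] at h1
      linarith
    have hslt : sa + sb < 1 := by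
      by_contra hcon
      push_neg at hcon
      have h1 : 1 * (h:ℝ) ≤ (sa + sb) * h := mul_le_mul_of_nonneg_right hcon hh0.le
      rw [hsum] at h1
      linarith
    have hpcomb : ((pZ1:ℝ), (pZ2:ℝ)) = sa • u1 + sb • u2 := by
      rw [hu1, hu2]
      apply Prod.ext
      · simpa using hp1
      · simpa using hp2
    have hint : ((pZ1:ℝ), (pZ2:ℝ)) ∈ interior Δ := by
      rw [hpcomb]
      exact interior_comb hΔconv h0 hu1Δ hu2Δ hsa0 hsb0 hspos hslt
    have hmem : ((pZ1:ℝ), (pZ2:ℝ)) ∈ {p ∈ interior Δ | IsLatticePt p} :=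
      ⟨hint, pZ1, pZ2, rfl⟩
    rw [huniq] at hmem
    have hzero := Set.mem_singleton_iff.mp hmem
    have hz1 : pZ1 = 0 := by have := congrArg Prod.fst hzero; simp only [Prod.fst_zero] at this; exact_mod_cast this
    have hz2 : pZ2 = 0 := by have := congrArg Prod.snd hzero; simp only [Prod.snd_zero] at this; exact_mod_cast this
    rw [hz1, hz2, hk] at hdotp
    simp at hdotp
  · -- k = -1: u1 + u2 - p is a nonzero interior lattice point
    have hkk : k1 + k2 = -1 := by rw [← hkdef]; exact hk
    have hsum : (sa + sb) * (h:ℝ) = 1 + h := by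
      rw [hk] at hsh; push_cast at hsh; linarith
    set ta : ℝ := 1 - sa with hta
    set tb : ℝ := 1 - sb with htb
    have hta0 : 0 ≤ ta := by rw [hta]; linarith
    have htb0 : 0 ≤ tb := by rw [htb]; linarith
    have htpos : 0 < ta + tb := by rw [hta, htb]; linarith
    have htlt : ta + tb < 1 := by
      rw [hta, htb]
      have h1 : 1 < sa + sb := by
        by_contra hcon
        push_neg at hcon
        have h1 : (sa + sb) * (h:ℝ) ≤ 1 * h := mul_le_mul_of_nonneg_right hcon hh0.le
        rw [hsum] at h1
        linarith
      linarith
    set qZ1 : ℤ := m1 + m2 - pZ1 with hqZ1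
    set qZ2 : ℤ := n1 + n2 - pZ2 with hqZ2
    have hqcomb : ((qZ1:ℝ), (qZ2:ℝ)) = ta • u1 + tb • u2 := by
      rw [hu1, hu2]
      apply Prod.ext
      · simp only [hqZ1, hta, htb, Prod.fst_add, Prod.smul_fst, smul_eq_mul]
        push_cast
        rw [hp1]; ring
      · simp only [hqZ2, hta, htb, Prod.snd_add, Prod.smul_snd, smul_eq_mul]
        push_cast
        rw [hp2]; ring
    have hint : ((qZ1:ℝ), (qZ2:ℝ)) ∈ interior Δ := by
      rw [hqcomb]
      exact interior_comb hΔconv h0 hu1Δ hu2Δ hta0 htb0 htpos htlt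
    have hmem : ((qZ1:ℝ), (qZ2:ℝ)) ∈ {p ∈ interior Δ | IsLatticePt p} :=
      ⟨hint, qZ1, qZ2, rfl⟩
    rw [huniq] at hmem
    have hzero := Set.mem_singleton_iff.mp hmem
    have hz1 : qZ1 = 0 := by have := congrArg Prod.fst hzero; simp only [Prod.fst_zero] at this; exact_mod_cast this
    have hz2 : qZ2 = 0 := by have := congrArg Prod.snd hzero; simp only [Prod.snd_zero] at this; exact_mod_cast this
    have hp1z : pZ1 = m1 + m2 := by rw [hqZ1] at hz1; omega
    have hp2z : pZ2 = n1 + n2 := by rw [hqZ2] at hz2; omega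
    have hcontr : (1:ℤ) - k * h = 2 * h := by
      rw [← hdotp, hp1z, hp2z]; linear_combination hF1 + hF2
    rw [hk] at hcontr
    omega

lemma backward (S : Finset (ℝ × ℝ)) (hS : ∀ p ∈ S, IsLatticePt p)
    (Δ : Set (ℝ × ℝ)) (hΔ : Δ = convexHull ℝ (S : Set (ℝ × ℝ)))
    (h0 : (0 : ℝ × ℝ) ∈ interior Δ)
    (huniq : {p ∈ interior Δ | IsLatticePt p} = {(0 : ℝ × ℝ)}) :
    ∃ T : Finset (ℝ × ℝ), (∀ p ∈ T, IsLatticePt p) ∧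
      {v : ℝ × ℝ | ∀ u ∈ Δ, dot u v ≥ -1} = convexHull ℝ (T : Set (ℝ × ℝ)) := by
  classical
  set K : Set (ℝ × ℝ) := {v : ℝ × ℝ | ∀ u ∈ S, dot u v ≥ -1} with hK
  have hKΔ : {v : ℝ × ℝ | ∀ u ∈ Δ, dot u v ≥ -1} = K := by
    ext v
    constructor
    · intro hv u huS
      exact hv u (hΔ ▸ subset_convexHull ℝ (S : Set (ℝ × ℝ)) huS)
    · intro hv u huΔ
      exact dual_hull hv u (hΔ ▸ huΔ)
  have hKfull : ∀ v ∈ K, ∀ u ∈ Δ, dot u v ≥ -1 := by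
    intro v hv
    rw [← hKΔ] at hv
    exact hv
  have hKconv : Convex ℝ K := by
    intro v1 hv1 v2 hv2 a b ha hb hab
    intro u huS
    have e : dot u (a • v1 + b • v2) = a * dot u v1 + b * dot u v2 := by
      simp only [dot, Prod.fst_add, Prod.snd_add, Prod.smul_fst, Prod.smul_snd, smul_eq_mul]
      ring
    rw [e]
    have h1 := hv1 u huS
    have h2 := hv2 u huS
    nlinarith [mul_le_mul_of_nonneg_left h1 ha, mul_le_mul_of_nonneg_left h2 hb]
  have hKclosed : IsClosed K := by
    have : K = ⋂ u ∈ S, {v : ℝ × ℝ | dot u v ≥ -1} := by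
      ext v; simp [hK]
    rw [this]
    refine isClosed_biInter fun u _ => ?_
    exact isClosed_le continuous_const
      ((continuous_const.mul continuous_fst).add (continuous_const.mul continuous_snd))
  obtain ⟨r, hr, hball⟩ : ∃ r > 0, Metric.ball (0 : ℝ × ℝ) r ⊆ Δ :=
    Metric.mem_nhds_iff.mp (mem_interior_iff_mem_nhds.mp h0)
  have hmemball : ∀ z : ℝ × ℝ, ‖z‖ = r / 2 → z ∈ Δ := by
    intro z hz
    apply hball
    rw [Metric.mem_ball, dist_zero_right, hz]
    linarith
  have hbound : ∀ v ∈ K, |v.1| ≤ 2 / r ∧ |v.2| ≤ 2 / r := by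
    intro v hv
    have hr2 : (0:ℝ) < r / 2 := by linarith
    have habs : |r / 2| = r / 2 := abs_of_pos hr2
    have hnrm1 : ‖((r / 2 : ℝ), (0:ℝ))‖ = r / 2 := by
      rw [Prod.norm_def]
      simp only [Real.norm_eq_abs, habs, abs_zero]
      exact max_eq_left hr2.le
    have hnrm2 : ‖((-(r / 2) : ℝ), (0:ℝ))‖ = r / 2 := by
      rw [Prod.norm_def]
      simp only [Real.norm_eq_abs, abs_neg, habs, abs_zero]
      exact max_eq_left hr2.le
    have hnrm3 : ‖((0:ℝ), (r / 2 : ℝ))‖ = r / 2 := by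
      rw [Prod.norm_def]
      simp only [Real.norm_eq_abs, habs, abs_zero]
      exact max_eq_right hr2.le
    have hnrm4 : ‖((0:ℝ), (-(r / 2) : ℝ))‖ = r / 2 := by
      rw [Prod.norm_def]
      simp only [Real.norm_eq_abs, abs_neg, habs, abs_zero]
      exact max_eq_right hr2.le
    have e1 := hKfull v hv _ (hmemball _ hnrm1)
    have e2 := hKfull v hv _ (hmemball _ hnrm2)
    have e3 := hKfull v hv _ (hmemball _ hnrm3)
    have e4 := hKfull v hv _ (hmemball _ hnrm4)
    simp only [dot] at e1 e2 e3 e4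
    constructor
    · rw [abs_le]
      constructor
      · rw [← neg_div, div_le_iff₀ hr]
        nlinarith
      · rw [le_div_iff₀ hr]
        nlinarith
    · rw [abs_le]
      constructor
      · rw [← neg_div, div_le_iff₀ hr]
        nlinarith
      · rw [le_div_iff₀ hr]
        nlinarith
  have hKcomp : IsCompact K := by
    refine Metric.isCompact_of_isClosed_isBounded hKclosed ?_
    refine (Metric.isBounded_closedBall (x := (0:ℝ×ℝ)) (r := 2 / r)).subset ?_
    intro v hv
    rw [Metric.mem_closedBall, dist_zero_right]
    obtain ⟨hb1, hb2⟩ := hbound v hv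
    rw [Prod.norm_def, Real.norm_eq_abs, Real.norm_eq_abs]
    exact max_le hb1 hb2
  -- the finite set of lattice points of K
  set N : ℤ := ⌈(2:ℝ) / r⌉ with hN
  set G : Finset (ℝ × ℝ) := ((Finset.Icc (-N) N) ×ˢ (Finset.Icc (-N) N)).image
    (fun mn : ℤ × ℤ => ((mn.1 : ℝ), (mn.2 : ℝ))) with hG
  set T : Finset (ℝ × ℝ) := G.filter (fun p => p ∈ K) with hT
  have hTlat : ∀ p ∈ T, IsLatticePt p := by
    intro p hp
    rw [hT, Finset.mem_filter] at hp
    have hp1 := hp.1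
    rw [hG] at hp1
    obtain ⟨mn, _, rfl⟩ := Finset.mem_image.mp hp1
    exact ⟨mn.1, mn.2, rfl⟩
  have hTK : (T : Set (ℝ × ℝ)) ⊆ K := by
    intro p hp
    rw [Finset.mem_coe, hT, Finset.mem_filter] at hp
    exact hp.2
  have hcover : ∀ p ∈ K, IsLatticePt p → p ∈ T := by
    rintro p hp ⟨m, n, rfl⟩
    rw [hT, Finset.mem_filter]
    refine ⟨?_, hp⟩
    rw [hG, Finset.mem_image]
    obtain ⟨hb1, hb2⟩ := hbound _ hp
    simp only at hb1 hb2
    have hNle : (2:ℝ) / r ≤ (N:ℝ) := Int.le_ceil _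
    have hm : -N ≤ m ∧ m ≤ N := by
      constructor
      · have : -(N:ℝ) ≤ (m:ℝ) := by
          have := (abs_le.mp hb1).1; linarith
        exact_mod_cast this
      · have : (m:ℝ) ≤ (N:ℝ) := (abs_le.mp hb1).2.trans hNle
        exact_mod_cast this
    have hn : -N ≤ n ∧ n ≤ N := by
      constructor
      · have : -(N:ℝ) ≤ (n:ℝ) := by
          have := (abs_le.mp hb2).1; linarith
        exact_mod_cast this
      · have : (n:ℝ) ≤ (N:ℝ) := (abs_le.mp hb2).2.trans hNle
        exact_mod_cast this
    exact ⟨(m, n), Finset.mem_product.mpr ⟨Finset.mem_Icc.mpr hm, Finset.mem_Icc.mpr hn⟩, rfl⟩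
  refine ⟨T, hTlat, ?_⟩
  rw [hKΔ]
  apply Set.Subset.antisymm
  · have hKM := closure_convexHull_extremePoints hKcomp hKconv
    have hsub : K.extremePoints ℝ ⊆ (T : Set (ℝ × ℝ)) := by
      intro w hw
      have hlat : IsLatticePt w :=
        extreme_lattice S hS Δ hΔ h0 huniq w (exists_tight_pair S w hw)
      exact hcover w hw.1 hlat
    calc K = closure (convexHull ℝ (K.extremePoints ℝ)) := hKM.symm
      _ ⊆ closure (convexHull ℝ (T : Set (ℝ × ℝ))) := closure_mono (convexHull_mono hsub)
      _ = convexHull ℝ (T : Set (ℝ × ℝ)) :=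
          ((T.finite_toSet.isCompact_convexHull ℝ).isClosed).closure_eq
  · exact convexHull_min hTK hKconv

end Refl

/-- A two-dimensional convex lattice polygon `Δ` containing the origin in its interior is
reflexive (its polar dual `{v | ∀ u ∈ Δ, ⟪u,v⟫ ≥ -1}` is again a lattice polygon, i.e. the
convex hull of finitely many lattice points) iff the origin is the unique interior lattice
point of `Δ`. -/
theorem stmt0 (S : Finset (ℝ × ℝ)) (hS : ∀ p ∈ S, IsLatticePt p)
    (Δ : Set (ℝ × ℝ)) (hΔ : Δ = convexHull ℝ (S : Set (ℝ × ℝ)))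
    (h0 : (0 : ℝ × ℝ) ∈ interior Δ) :
    (∃ T : Finset (ℝ × ℝ), (∀ p ∈ T, IsLatticePt p) ∧
        {v : ℝ × ℝ | ∀ u ∈ Δ, u.1 * v.1 + u.2 * v.2 ≥ -1}
          = convexHull ℝ (T : Set (ℝ × ℝ)))
      ↔ {p ∈ interior Δ | IsLatticePt p} = {(0 : ℝ × ℝ)} := by
  constructor
  · rintro ⟨T, hT, hTd⟩
    exact Refl.forward S Δ hΔ h0 T hT hTd
  · intro huniq
    exact Refl.backward S hS Δ hΔ h0 huniq
end

section
/- Let d ≥ 3 and let v₁, …, v_d ∈ ℤ² be pairwise distinct primitive vectors listed in strictly counterclockwise cyclic order (so that going from each vᵢ to v_{i+1}, indices mod d, one traverses a positive angle, and the total turning is one full revolution), satisfying det(vᵢ, v_{i+1}) = 1 for all i (indices mod d). Then for each i there is a unique integer cᵢ with v_{i−1} + v_{i+1} = cᵢ·vᵢ, and the sum satisfies Σ_{i=1}^{d} cᵢ = 3d − 12. -/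
open Finset Real

open Finset

/-- 2x2 determinant of two integer vectors. -/
def Dt (u w : ℤ × ℤ) : ℤ := u.1 * w.2 - u.2 * w.1

lemma Dt_self (u : ℤ × ℤ) : Dt u u = 0 := by simp [Dt]; ring

lemma Dt_skew (u w : ℤ × ℤ) : Dt u w = - Dt w u := by simp [Dt]; ring

lemma Dt_neg_right (u w : ℤ × ℤ) : Dt u (-w) = - Dt u w := by simp [Dt]; ring

lemma prod_eq (u w : ℤ × ℤ) (h1 : u.1 = w.1) (h2 : u.2 = w.2) : u = w :=
  Prod.ext h1 h2

lemma collinear_of_det_eq_zero (u w : ℤ × ℤ) (hu : Int.gcd u.1 u.2 = 1)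
    (h : Dt w u = 0) : ∃ c : ℤ, w = c • u := by
  obtain ⟨x, y, hxy⟩ := Int.isCoprime_iff_gcd_eq_one.mpr hu
  refine ⟨w.1 * x + w.2 * y, ?_⟩
  have hD : w.1 * u.2 - w.2 * u.1 = 0 := h
  apply prod_eq <;> simp only [Prod.smul_fst, Prod.smul_snd, smul_eq_mul]
  · linear_combination (-w.1) * hxy + y * hD
  · linear_combination (-w.2) * hxy + (-x) * hD

lemma ne_zero_of_prim (u : ℤ × ℤ) (hu : Int.gcd u.1 u.2 = 1) : u ≠ 0 := by
  intro h; rw [h] at hu; simp at hu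

lemma smul_cancel (u : ℤ × ℤ) (hu : u ≠ 0) (c c' : ℤ) (h : c • u = c' • u) : c = c' := by
  have h1 : c * u.1 = c' * u.1 := congrArg Prod.fst h
  have h2 : c * u.2 = c' * u.2 := congrArg Prod.snd h
  by_cases h1' : u.1 = 0
  · have h2' : u.2 ≠ 0 := by
      intro h2''; exact hu (Prod.ext h1' h2'')
    exact mul_right_cancel₀ h2' h2
  · exact mul_right_cancel₀ h1' h1

/-- key linearity: from `w1 + w2 = e • b`, `Dt u w2 = e * Dt u b - Dt u w1`. -/
lemma Dt_rec (u w1 w2 b : ℤ × ℤ) (e : ℤ) (h : w1 + w2 = e • b) :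
    Dt u w2 = e * Dt u b - Dt u w1 := by
  have hx : w1.1 + w2.1 = e * b.1 := by
    have := congrArg Prod.fst h; simpa using this
  have hy : w1.2 + w2.2 = e * b.2 := by
    have := congrArg Prod.snd h; simpa using this
  simp only [Dt]
  linear_combination u.1 * hy - u.2 * hx

/-- from `w1 + w2 = e • b` and `Dt b n = 1`, `e = Dt w1 n + Dt w2 n`. -/
lemma smul_sum_det (w1 w2 b n : ℤ × ℤ) (e : ℤ) (h : w1 + w2 = e • b)
    (hbn : Dt b n = 1) : e = Dt w1 n + Dt w2 n := by
  have hx : w1.1 + w2.1 = e * b.1 := by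
    have := congrArg Prod.fst h; simpa using this
  have hy : w1.2 + w2.2 = e * b.2 := by
    have := congrArg Prod.snd h; simpa using this
  simp only [Dt] at hbn ⊢
  linear_combination (-n.2) * hx + n.1 * hy + (-e) * hbn

/-- primitive vectors with zero determinant are equal up to sign -/
lemma pm_of_det_eq_zero (u w : ℤ × ℤ) (hu : Int.gcd u.1 u.2 = 1)
    (hw : Int.gcd w.1 w.2 = 1) (h : Dt u w = 0) : w = u ∨ w = -u := by
  obtain ⟨c, hc⟩ := collinear_of_det_eq_zero u w hu (by rw [Dt_skew, h]; ring)
  have h1 : w.1 = c * u.1 := by rw [hc]; simp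
  have h2 : w.2 = c * u.2 := by rw [hc]; simp
  have : Int.gcd (c * u.1) (c * u.2) = 1 := by rw [← h1, ← h2]; exact hw
  rw [Int.gcd_mul_left] at this
  have hc1 : c.natAbs = 1 := by
    have := Nat.eq_one_of_mul_eq_one_right this
    exact this
  rcases Int.natAbs_eq_iff.mp hc1 with h | h
  · left; rw [hc, h]; simp
  · right; rw [hc, h]; simp

lemma mul_ge_two (a b : ℤ) (ha : 2 ≤ a) (hb : 1 ≤ b) : 2 * b ≤ a * b :=
  mul_le_mul_of_nonneg_right ha (by linarith)

lemma one_le_left_of_mul (a b : ℤ) (hb : 1 ≤ b) (h : 1 ≤ a * b) : 1 ≤ a := by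
  by_contra hc
  push_neg at hc
  have ha : a ≤ 0 := by omega
  have := mul_nonpos_of_nonpos_of_nonneg ha (by linarith : (0:ℤ) ≤ b)
  linarith

lemma one_le_left_of_mul_neg (a b : ℤ) (hb : b ≤ -1) (h : a * b ≤ -1) : 1 ≤ a := by
  by_contra hc
  push_neg at hc
  have ha : a ≤ 0 := by omega
  have h0 : 0 ≤ (-a) * (-b) := mul_nonneg (by linarith) (by linarith)
  rw [neg_mul_neg] at h0
  linarith

lemma le_zero_of_mul_lt (a b : ℤ) (hb : 1 ≤ b) (h : a * b < b) : a ≤ 0 := by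
  by_contra hc
  push_neg at hc
  have ha : 1 ≤ a := by omega
  have : 1 * b ≤ a * b := mul_le_mul_of_nonneg_right ha (by linarith)
  linarith

lemma le_zero_of_mul_gt_neg (a b : ℤ) (hb : b ≤ -1) (h : b < a * b) : a ≤ 0 := by
  by_contra hc
  push_neg at hc
  have ha : 1 ≤ a := by omega
  have : a * b ≤ 1 * b := mul_le_mul_of_nonpos_right ha (by linarith)
  linarith

lemma neg_one_mul_le (a b : ℤ) (ha : a ≤ -1) (hb : 0 ≤ b) : a * b ≤ -b := by
  have : a * b ≤ -1 * b := mul_le_mul_of_nonneg_right ha hb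
  linarith

lemma neg_one_mul_ge (a b : ℤ) (ha : a ≤ -1) (hb : b ≤ 0) : -b ≤ a * b := by
  have : -1 * b ≤ a * b := mul_le_mul_of_nonpos_right ha hb
  linarith

/-- chain lemma: positive unimodular chain from 0 to 0 of length ≥ 3 must contain γ = 1 -/
lemma Z1 (k : ℕ) (Q γ : ℕ → ℤ) (hk : 3 ≤ k) (hQ0 : Q 0 = 0) (hQ1 : Q 1 = 1)
    (hrec : ∀ t, 1 ≤ t → t ≤ k - 1 → Q (t+1) = γ t * Q t - Q (t-1))
    (hpos : ∀ t, 1 ≤ t → t ≤ k - 1 → 1 ≤ Q t)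
    (hQk : Q k = 0)
    (hγ : ∀ t, 1 ≤ t → t ≤ k - 1 → γ t ≠ 1) : False := by
  have hγ2 : ∀ t, 1 ≤ t → t ≤ k - 1 → 2 ≤ γ t := by
    intro t h1 h2
    have hQt : 1 ≤ Q t := hpos t h1 h2
    have heq : γ t * Q t = Q (t+1) + Q (t-1) := by
      have := hrec t h1 h2; linarith
    have hge : 1 ≤ γ t * Q t := by
      rcases Nat.eq_or_lt_of_le h1 with h | h
      · -- t = 1 : Q 0 = 0, Q 2 ≥ 1
        have ht1 : t = 1 := h.symm
        subst ht1
        have h21 : 1 ≤ Q 2 := hpos 2 (by omega) (by omega)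
        simp only [hQ0] at heq
        linarith
      · have h11 : 1 ≤ Q (t-1) := hpos (t-1) (by omega) (by omega)
        have hn : 0 ≤ Q (t+1) := by
          rcases Nat.eq_or_lt_of_le h2 with h' | h'
          · have hh : t + 1 = k := by omega
            rw [hh, hQk]
          · have : 1 ≤ Q (t+1) := hpos (t+1) (by omega) (by omega)
            linarith
        linarith
    have h1' : 1 ≤ γ t := one_le_left_of_mul _ _ hQt hge
    have := hγ t h1 h2
    omega
  have grow : ∀ t, t ≤ k - 1 → Q (t+1) ≥ Q t + 1 := by
    intro t
    induction t with
    | zero => intro _; rw [hQ0, hQ1]; norm_num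
    | succ s ih =>
      intro hs
      have ihs := ih (by omega)
      have h1 : 1 ≤ s + 1 := by omega
      have hrec' := hrec (s+1) h1 hs
      have hs1 : s + 1 - 1 = s := rfl
      rw [hs1] at hrec'
      have hQs1 : 1 ≤ Q (s+1) := hpos (s+1) h1 hs
      have hγs := hγ2 (s+1) h1 hs
      have hmul := mul_ge_two (γ (s+1)) (Q (s+1)) hγs hQs1
      -- Q (s+2) = γ * Q(s+1) - Q s ≥ 2 Q(s+1) - Q s ≥ Q (s+1) + 1
      have : Q (s+1+1) = γ (s+1) * Q (s+1) - Q s := hrec'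
      linarith
  have hlast := grow (k-1) (le_refl _)
  have hk1 : k - 1 + 1 = k := by omega
  rw [hk1] at hlast
  have := hpos (k-1) (by omega) (le_refl _)
  omega

/-- main contradiction lemma for the no-blowdown case -/
lemma Z2 (d m : ℕ) (Q γ : ℕ → ℤ) (hd : 5 ≤ d) (hm2 : 2 ≤ m) (hmd : m ≤ d - 2)
    (hQ0 : Q 0 = 0) (hQ1 : Q 1 = 1) (hQ2 : 2 ≤ Q 2)
    (hrec : ∀ t, 1 ≤ t → t ≤ d - 1 → Q (t+1) = γ t * Q t - Q (t-1))
    (hpos : ∀ t, 1 ≤ t → t ≤ m → 1 ≤ Q t)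
    (hneg : ∀ t, m + 1 ≤ t → t ≤ d - 1 → Q t ≤ -1)
    (hQd1 : Q (d-1) = -1) (hQd : Q d = 0)
    (hγ : ∀ t, 1 ≤ t → t ≤ d - 1 → γ t ≠ 0 ∧ γ t ≠ 1) : False := by
  -- forward growth on [1, m-1]
  have F1 : ∀ t, 1 ≤ t → t ≤ m - 1 → Q (t+1) ≥ Q t + 1 := by
    intro t
    induction t with
    | zero => omega
    | succ s ih =>
      intro _ hs
      rcases Nat.eq_zero_or_pos s with h | h
      · subst h; rw [hQ1]; linarith
      · have ihs := ih h (by omega)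
        have h1 : 1 ≤ s + 1 := by omega
        have h2 : s + 1 ≤ d - 1 := by omega
        have hrec' := hrec (s+1) h1 h2
        have hs1 : s + 1 - 1 = s := rfl
        rw [hs1] at hrec'
        have hQs1 : 1 ≤ Q (s+1) := hpos (s+1) h1 (by omega)
        have hQs2 : 1 ≤ Q (s+2) := hpos (s+2) (by omega) (by omega)
        have hQs0 : 1 ≤ Q s := hpos s h (by omega)
        have hγs : 2 ≤ γ (s+1) := by
          have hne := hγ (s+1) h1 h2
          have hge : 1 ≤ γ (s+1) * Q (s+1) := by
            have : Q (s+1+1) = γ (s+1) * Q (s+1) - Q s := hrec'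
            linarith
          have := one_le_left_of_mul _ _ hQs1 hge
          omega
        have hmul := mul_ge_two (γ (s+1)) (Q (s+1)) hγs hQs1
        have : Q (s+1+1) = γ (s+1) * Q (s+1) - Q s := hrec'
        linarith
  have hQm : Q m ≥ Q (m-1) + 1 := by
    have := F1 (m-1) (by omega) (by omega)
    have hm1 : m - 1 + 1 = m := by omega
    rwa [hm1] at this
  have hQm1' : 1 ≤ Q (m-1) := hpos (m-1) (by omega) (by omega)
  have hQm2 : 2 ≤ Q m := by omega
  -- backward decay on [m+1, d-2] : Q t ≤ Q (t+1) - 1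
  have F2 : ∀ j t, t = d - 2 - j → m + 1 ≤ t → t ≤ d - 2 → Q t ≤ Q (t+1) - 1 := by
    intro j
    induction j with
    | zero =>
      intro t ht h1 h2
      have htd : t = d - 2 := by omega
      subst htd
      have hrec' := hrec (d-1) (by omega) (le_refl _)
      have h3 : d - 1 + 1 = d := by omega
      have h4 : d - 1 - 1 = d - 2 := by omega
      rw [h3, h4, hQd, hQd1] at hrec'
      have hQd2 : Q (d-2) ≤ -1 := hneg (d-2) h1 (by omega)
      have hγd : 2 ≤ γ (d-1) := by
        have hne := hγ (d-1) (by omega) (le_refl _)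
        have : Q (d-2) = -γ (d-1) := by linarith
        omega
      have heq : Q (d-2) = -γ (d-1) := by linarith
      have hd1 : d - 2 + 1 = d - 1 := by omega
      rw [hd1, hQd1]
      omega
    | succ j ih =>
      intro t ht h1 h2
      by_cases hcase : t = d - 2
      · exact ih t (by omega) h1 h2
      · have htj : t < d - 2 := by omega
        have ih' : Q (t+1) ≤ Q (t+2) - 1 := by
          have := ih (t+1) (by omega) (by omega) (by omega)
          simpa using this
        have hrec' := hrec (t+1) (by omega) (by omega)
        have h4 : t + 1 - 1 = t := rfl
        rw [h4] at hrec'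
        have hQt1 : Q (t+1) ≤ -1 := hneg (t+1) (by omega) (by omega)
        have hQt2 : Q (t+2) ≤ -1 := hneg (t+2) (by omega) (by omega)
        have hQt : Q t ≤ -1 := hneg t h1 (by omega)
        have heq2 : Q (t+2) = γ (t+1) * Q (t+1) - Q t := hrec'
        have hγt : 2 ≤ γ (t+1) := by
          have hne := hγ (t+1) (by omega) (by omega)
          have hle : γ (t+1) * Q (t+1) ≤ -1 := by linarith
          have := one_le_left_of_mul_neg (γ (t+1)) (Q (t+1)) hQt1 hle
          omega
        -- Q t = γ Q(t+1) - Q (t+2) ≤ 2 Q(t+1) - Q(t+2) ≤ Q(t+1) - 1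
        have hmul : γ (t+1) * Q (t+1) ≤ 2 * Q (t+1) := by
          have := mul_le_mul_of_nonpos_right hγt (by linarith : Q (t+1) ≤ 0)
          linarith
        linarith
  -- junction at m
  have hQm1neg : Q (m+1) ≤ -1 := hneg (m+1) (le_refl _) (by omega)
  have hrecm := hrec m (by omega) (by omega)
  have heqm : Q (m+1) = γ m * Q m - Q (m-1) := hrecm
  have hγm : γ m ≤ -1 := by
    have hne := hγ m (by omega) (by omega)
    have hlt : γ m * Q m < Q m := by linarith
    have := le_zero_of_mul_lt (γ m) (Q m) (by linarith) hlt
    omega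
  have hstar : Q (m+1) ≤ -Q m - Q (m-1) := by
    have := neg_one_mul_le (γ m) (Q m) hγm (by linarith)
    linarith
  -- junction at m+1
  have hQm2ge : Q (m+2) ≥ Q (m+1) + 1 := by
    by_cases h : m + 1 ≤ d - 2
    · have h5 := F2 (d - 2 - (m+1)) (m+1) (by omega) (le_refl _) h
      rw [show m+1+1 = m+2 from rfl] at h5
      omega
    · have hm1 : m + 1 = d - 1 := by omega
      have hm2' : m + 2 = d := by omega
      rw [hm1, hm2', hQd, hQd1]; norm_num
  have hrecm1 := hrec (m+1) (by omega) (by omega)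
  have h4 : m + 1 - 1 = m := rfl
  rw [h4] at hrecm1
  have heqm1 : Q (m+2) = γ (m+1) * Q (m+1) - Q m := hrecm1
  have hγm1 : γ (m+1) ≤ -1 := by
    have hne := hγ (m+1) (by omega) (by omega)
    have hgt : Q (m+1) < γ (m+1) * Q (m+1) := by linarith
    have := le_zero_of_mul_gt_neg (γ (m+1)) (Q (m+1)) hQm1neg hgt
    omega
  have hfin : -Q (m+1) ≤ γ (m+1) * Q (m+1) :=
    neg_one_mul_ge (γ (m+1)) (Q (m+1)) hγm1 (by linarith)
  have hQm2nonpos : Q (m+2) ≤ 0 := by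
    by_cases h : m + 2 ≤ d - 1
    · have := hneg (m+2) (by omega) h; omega
    · have : m + 2 = d := by omega
      rw [this, hQd]
  -- final contradiction: Q(m+2) = γ(m+1) Q(m+1) - Q m ≥ -Q(m+1) - Q m ≥ Q(m-1) ≥ 1
  linarith



section SinFacts

lemma sin_lt_pi_of (x : ℝ) (h0 : 0 < x) (h2 : x < 2 * π) (hs : 0 < Real.sin x) : x < π := by
  by_contra hc
  push_neg at hc
  have h1 : Real.sin (x - π) ≥ 0 :=
    Real.sin_nonneg_of_nonneg_of_le_pi (by linarith) (by linarith)
  have : Real.sin (x - π) = - Real.sin x := by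
    rw [Real.sin_sub, Real.sin_pi, Real.cos_pi]; ring
  linarith

lemma pi_lt_of_sin_neg (x : ℝ) (h0 : 0 < x) (h2 : x < 2 * π) (hs : Real.sin x < 0) : π < x := by
  by_contra hc
  push_neg at hc
  have h1 : Real.sin x ≥ 0 := Real.sin_nonneg_of_nonneg_of_le_pi (by linarith) hc
  linarith

lemma eq_pi_of_sin_zero (x : ℝ) (h0 : 0 < x) (h2 : x < 2 * π) (hs : Real.sin x = 0) : x = π := by
  obtain ⟨n, hn⟩ := Real.sin_eq_zero_iff.mp hs
  have hpi := Real.pi_pos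
  have hn2 : (n : ℝ) < 2 := by
    by_contra hc
    push_neg at hc
    nlinarith
  have hn0 : (0 : ℝ) < (n : ℝ) := by
    by_contra hc
    push_neg at hc
    nlinarith
  have : n = 1 := by exact_mod_cast (by constructor <;> [exact_mod_cast hn0; exact_mod_cast hn2] : (0:ℤ) < n ∧ (n:ℤ) < 2).elim (fun h1 h2 => by omega)
  rw [this] at hn
  simpa using hn.symm

end SinFacts

structure Cfg (d : ℕ) where
  v : ℕ → ℤ × ℤ
  r : ℕ → ℝ
  θ : ℕ → ℝ
  hd : 3 ≤ d
  hinj : ∀ i, i < d → ∀ j, j < d → v i = v j → i = j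
  hprim : ∀ i, i < d → Int.gcd (v i).1 (v i).2 = 1
  hr : ∀ i, i < d → 0 < r i
  hpolar : ∀ i, i < d → ((v i).1 : ℝ) = r i * Real.cos (θ i) ∧
      ((v i).2 : ℝ) = r i * Real.sin (θ i)
  hccw : ∀ i j, i < j → j < d → θ i < θ j
  hwind : ∀ i, i < d → ∀ j, j < d → θ i - θ j < 2 * π
  hdet : ∀ t, t + 1 < d → Dt (v t) (v (t+1)) = 1
  hdetw : Dt (v (d-1)) (v 0) = 1

namespace Cfg

variable {d : ℕ} (C : Cfg d)

lemma Dsin (a b : ℕ) (ha : a < d) (hb : b < d) :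
    ((Dt (C.v a) (C.v b) : ℤ) : ℝ) = C.r a * C.r b * Real.sin (C.θ b - C.θ a) := by
  obtain ⟨hx, hy⟩ := C.hpolar a ha
  obtain ⟨hx', hy'⟩ := C.hpolar b hb
  have : ((Dt (C.v a) (C.v b) : ℤ) : ℝ) =
      ((C.v a).1 : ℝ) * ((C.v b).2 : ℝ) - ((C.v a).2 : ℝ) * ((C.v b).1 : ℝ) := by
    simp [Dt]
  rw [this, hx, hy, hx', hy', Real.sin_sub]
  ring

lemma sin_pos_of_D (a b : ℕ) (ha : a < d) (hb : b < d)
    (hD : 1 ≤ Dt (C.v a) (C.v b)) : 0 < Real.sin (C.θ b - C.θ a) := by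
  have h := C.Dsin a b ha hb
  have hra := C.hr a ha
  have hrb := C.hr b hb
  have hD' : (1:ℝ) ≤ ((Dt (C.v a) (C.v b) : ℤ) : ℝ) := by exact_mod_cast hD
  by_contra hc
  push_neg at hc
  nlinarith [mul_pos hra hrb]

lemma D_pos_of_sin (a b : ℕ) (ha : a < d) (hb : b < d)
    (hs : 0 < Real.sin (C.θ b - C.θ a)) : 1 ≤ Dt (C.v a) (C.v b) := by
  have h := C.Dsin a b ha hb
  have hra := C.hr a ha
  have hrb := C.hr b hb
  have : (0:ℝ) < ((Dt (C.v a) (C.v b) : ℤ) : ℝ) := by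
    rw [h]; positivity
  have : (0:ℤ) < Dt (C.v a) (C.v b) := by exact_mod_cast this
  omega

lemma D_nonpos_of_sin (a b : ℕ) (ha : a < d) (hb : b < d)
    (hs : Real.sin (C.θ b - C.θ a) ≤ 0) : Dt (C.v a) (C.v b) ≤ 0 := by
  have h := C.Dsin a b ha hb
  have hra := C.hr a ha
  have hrb := C.hr b hb
  have : ((Dt (C.v a) (C.v b) : ℤ) : ℝ) ≤ 0 := by
    rw [h]
    have : 0 < C.r a * C.r b := by positivity
    nlinarith
  exact_mod_cast this

lemma sin_nonpos_of_D (a b : ℕ) (ha : a < d) (hb : b < d)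
    (hD : Dt (C.v a) (C.v b) ≤ 0) : Real.sin (C.θ b - C.θ a) ≤ 0 := by
  by_contra hc
  push_neg at hc
  have := C.D_pos_of_sin a b ha hb hc
  omega

lemma sin_zero_of_D (a b : ℕ) (ha : a < d) (hb : b < d)
    (hD : Dt (C.v a) (C.v b) = 0) : Real.sin (C.θ b - C.θ a) = 0 := by
  have h := C.Dsin a b ha hb
  rw [hD] at h
  have hra := C.hr a ha
  have hrb := C.hr b hb
  have h0 : C.r a * C.r b * Real.sin (C.θ b - C.θ a) = 0 := by
    simpa using h.symm
  have : C.r a * C.r b ≠ 0 := by positivity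
  rcases mul_eq_zero.mp h0 with h' | h'
  · exact absurd h' this
  · exact h'

/-- angle difference of increasing indices is in (0, 2π) -/
lemma theta_diff (a b : ℕ) (hab : a < b) (hb : b < d) :
    0 < C.θ b - C.θ a ∧ C.θ b - C.θ a < 2 * π := by
  constructor
  · have := C.hccw a b hab hb; linarith
  · exact C.hwind b hb a (by omega)

/-- consecutive dets give turning < π -/
lemma theta_step (a b : ℕ) (hab : a < b) (hb : b < d)
    (hD : 1 ≤ Dt (C.v a) (C.v b)) : C.θ b - C.θ a < π := by
  obtain ⟨h0, h2⟩ := C.theta_diff a b hab hb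
  exact sin_lt_pi_of _ h0 h2 (C.sin_pos_of_D a b (by omega) hb hD)

lemma theta_step_gt (a b : ℕ) (hab : a < b) (hb : b < d)
    (hD : Dt (C.v a) (C.v b) ≤ -1) : π < C.θ b - C.θ a := by
  obtain ⟨h0, h2⟩ := C.theta_diff a b hab hb
  apply pi_lt_of_sin_neg _ h0 h2
  have hsn := C.sin_nonpos_of_D a b (by omega) hb (by omega)
  rcases lt_or_eq_of_le hsn with h | h
  · exact h
  · exfalso
    have hds := C.Dsin a b (by omega) hb
    rw [h, mul_zero] at hds
    have : Dt (C.v a) (C.v b) = 0 := by exact_mod_cast hds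
    omega

end Cfg

def CRel {d : ℕ} (C : Cfg d) (c : ℕ → ℤ) : Prop :=
  (∀ t, 1 ≤ t → t + 1 < d → C.v (t-1) + C.v (t+1) = c t • C.v t) ∧
  (C.v (d-1) + C.v 1 = c 0 • C.v 0) ∧
  (C.v (d-2) + C.v 0 = c (d-1) • C.v (d-1))

namespace Cfg

variable {d : ℕ} (C : Cfg d)

lemma cD_mid {c : ℕ → ℤ} (h : CRel C c) (t : ℕ) (h1 : 1 ≤ t) (h2 : t + 1 < d) :
    c t = Dt (C.v (t-1)) (C.v (t+1)) := by
  have hrel := h.1 t h1 h2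
  have hdet := C.hdet t h2
  have := smul_sum_det _ _ _ _ _ hrel hdet
  rw [Dt_self] at this
  linarith

lemma cD0 {c : ℕ → ℤ} (h : CRel C c) : c 0 = Dt (C.v (d-1)) (C.v 1) := by
  have hdet := C.hdet 0 (by have := C.hd; omega)
  have := smul_sum_det _ _ _ _ _ h.2.1 hdet
  rw [Dt_self] at this
  simpa using this

lemma cDlast {c : ℕ → ℤ} (h : CRel C c) : c (d-1) = Dt (C.v (d-2)) (C.v 0) := by
  have := smul_sum_det _ _ _ _ _ h.2.2 C.hdetw
  rw [Dt_self] at this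
  simpa using this

lemma antipodal_of_det_zero (a b : ℕ) (ha : a < d) (hb : b < d) (hne : a ≠ b)
    (h : Dt (C.v a) (C.v b) = 0) : C.v b = - C.v a := by
  rcases pm_of_det_eq_zero (C.v a) (C.v b) (C.hprim a ha) (C.hprim b hb) h with h' | h'
  · exact absurd (C.hinj b hb a ha h') (by omega)
  · exact h'

/-- rotation by one step -/
noncomputable def rot1 : Cfg d where
  v := fun t => C.v ((t+1) % d)
  r := fun t => C.r ((t+1) % d)
  θ := fun t => if t + 1 < d then C.θ (t+1) else C.θ 0 + 2*π
  hd := C.hd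
  hinj := by
    intro i hi j hj hv
    have hd3 := C.hd
    have hmi : (i + 1) % d < d := Nat.mod_lt _ (by omega)
    have hmj : (j + 1) % d < d := Nat.mod_lt _ (by omega)
    have heq := C.hinj _ hmi _ hmj hv
    have hi' : (i+1) % d = if i + 1 < d then i + 1 else 0 := by
      split
      · exact Nat.mod_eq_of_lt ‹_›
      · rw [show i + 1 = d from by omega]; exact Nat.mod_self d
    have hj' : (j+1) % d = if j + 1 < d then j + 1 else 0 := by
      split
      · exact Nat.mod_eq_of_lt ‹_›
      · rw [show j + 1 = d from by omega]; exact Nat.mod_self d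
    rw [hi', hj'] at heq
    split at heq <;> split at heq <;> omega
  hprim := by
    intro i hi
    have hd3 := C.hd
    exact C.hprim _ (Nat.mod_lt _ (by omega))
  hr := by
    intro i hi
    have hd3 := C.hd
    exact C.hr _ (Nat.mod_lt _ (by omega))
  hpolar := by
    intro i hi
    have hd3 := C.hd
    by_cases h : i + 1 < d
    · rw [if_pos h, Nat.mod_eq_of_lt h]
      exact C.hpolar _ h
    · rw [if_neg h, show (i+1) % d = 0 from by
        rw [show i + 1 = d from by omega]; exact Nat.mod_self d]
      rw [Real.cos_add_two_pi, Real.sin_add_two_pi]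
      exact C.hpolar 0 (by omega)
  hccw := by
    intro i j hij hj
    have hd3 := C.hd
    by_cases h' : j + 1 < d
    · rw [if_pos (by omega : i + 1 < d), if_pos h']
      exact C.hccw _ _ (by omega) h'
    · rw [if_neg h']
      by_cases h : i + 1 < d
      · rw [if_pos h]
        have := C.hwind (i+1) h 0 (by omega)
        linarith
      · omega
  hwind := by
    intro i hi j hj
    have hd3 := C.hd
    have hpi := Real.pi_pos
    by_cases h : i + 1 < d <;> by_cases h' : j + 1 < d
    · rw [if_pos h, if_pos h']
      exact C.hwind _ h _ h'
    · rw [if_pos h, if_neg h']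
      have := C.hwind (i+1) h 0 (by omega)
      linarith
    · rw [if_neg h, if_pos h']
      have := C.hccw 0 (j+1) (by omega) h'
      linarith
    · rw [if_neg h, if_neg h']
      linarith
  hdet := by
    intro t ht
    have hd3 := C.hd
    rw [Nat.mod_eq_of_lt ht]
    by_cases h : t + 1 + 1 < d
    · rw [Nat.mod_eq_of_lt h]
      exact C.hdet (t+1) h
    · rw [show (t+1+1) % d = 0 from by
        rw [show t + 1 + 1 = d from by omega]; exact Nat.mod_self d]
      rw [show t + 1 = d - 1 from by omega]
      exact C.hdetw
  hdetw := by
    have hd3 := C.hd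
    rw [show (d - 1 + 1) % d = 0 from by
      rw [show d - 1 + 1 = d from by omega]; exact Nat.mod_self d]
    rw [show (0 + 1) % d = 1 from Nat.mod_eq_of_lt (by omega)]
    exact C.hdet 0 (by omega)

lemma rel_rot1 {c : ℕ → ℤ} (h : CRel C c) : CRel C.rot1 (fun t => c ((t+1) % d)) := by
  have hd3 := C.hd
  refine ⟨?_, ?_, ?_⟩
  · intro t h1 h2
    show C.v ((t - 1 + 1) % d) + C.v ((t + 1 + 1) % d) = c ((t + 1) % d) • C.v ((t+1) % d)
    rw [show t - 1 + 1 = t from by omega, Nat.mod_eq_of_lt (by omega : t < d),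
      Nat.mod_eq_of_lt h2]
    by_cases h3 : t + 1 + 1 < d
    · rw [Nat.mod_eq_of_lt h3]
      have hh := h.1 (t+1) (by omega) h3
      rw [show t + 1 - 1 = t from rfl] at hh
      exact hh
    · rw [show (t+1+1) % d = 0 from by
        rw [show t + 1 + 1 = d from by omega]; exact Nat.mod_self d]
      have ht1 : t + 1 = d - 1 := by omega
      rw [ht1, show t = d - 2 from by omega]
      exact h.2.2
  · show C.v ((d - 1 + 1) % d) + C.v ((1 + 1) % d) = c ((0 + 1) % d) • C.v ((0+1) % d)
    rw [show d - 1 + 1 = d from by omega, Nat.mod_self,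
      Nat.mod_eq_of_lt (by omega : 1 + 1 < d), Nat.mod_eq_of_lt (by omega : 0 + 1 < d)]
    have hh := h.1 1 (le_refl _) (by omega)
    rw [show (1:ℕ) - 1 = 0 from rfl] at hh
    exact hh
  · show C.v ((d - 2 + 1) % d) + C.v ((0 + 1) % d) = c ((d - 1 + 1) % d) • C.v ((d - 1 + 1) % d)
    rw [show d - 2 + 1 = d - 1 from by omega, Nat.mod_eq_of_lt (by omega : d - 1 < d),
      Nat.mod_eq_of_lt (by omega : 0 + 1 < d), show d - 1 + 1 = d from by omega, Nat.mod_self]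
    exact h.2.1

end Cfg

/-- iterated rotation -/
noncomputable def Cfg.rotk {d : ℕ} (C : Cfg d) : ℕ → Cfg d
  | 0 => C
  | (k+1) => (Cfg.rotk C k).rot1

namespace Cfg

variable {d : ℕ} (C : Cfg d)

lemma rotk_v (k : ℕ) : ∀ t, t < d → (C.rotk k).v t = C.v ((t + k) % d) := by
  induction k with
  | zero => intro t ht; show C.v t = _; rw [Nat.add_zero, Nat.mod_eq_of_lt ht]
  | succ k ih =>
    intro t ht
    have h1 : (C.rotk (k+1)).v t = (C.rotk k).v ((t+1) % d) := rfl
    rw [h1, ih ((t+1) % d) (Nat.mod_lt _ (by have := C.hd; omega))]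
    congr 1
    rw [Nat.mod_add_mod]
    congr 1
    omega

lemma rel_rotk {c : ℕ → ℤ} (h : CRel C c) (k : ℕ) :
    CRel (C.rotk k) (fun t => c ((t + k) % d)) := by
  induction k with
  | zero =>
    have hd3 := C.hd
    refine ⟨?_, ?_, ?_⟩
    · intro t h1 h2
      show C.v (t-1) + C.v (t+1) = c ((t + 0) % d) • C.v t
      rw [show (t + 0) % d = t from by rw [Nat.add_zero]; exact Nat.mod_eq_of_lt (by omega)]
      exact h.1 t h1 h2
    · show C.v (d-1) + C.v 1 = c ((0 + 0) % d) • C.v 0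
      rw [show (0 + 0) % d = 0 from by simp]
      exact h.2.1
    · show C.v (d-2) + C.v 0 = c ((d - 1 + 0) % d) • C.v (d-1)
      rw [show (d - 1 + 0) % d = d - 1 from by rw [Nat.add_zero]; exact Nat.mod_eq_of_lt (by omega)]
      exact h.2.2
  | succ k ih =>
    have h' := (C.rotk k).rel_rot1 ih
    have hfun : (fun t => (fun s => c ((s + k) % d)) ((t + 1) % d)) = (fun t => c ((t + (k+1)) % d)) := by
      funext t
      show c (((t + 1) % d + k) % d) = _
      congr 1
      rw [Nat.mod_add_mod]
      congr 1
      omega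
    show CRel ((C.rotk k).rot1) _
    rw [← hfun]
    exact h'

lemma sum_rot1_aux {M : Type*} [AddCommMonoid M] (n : ℕ) (hd : 1 ≤ n) (f : ℕ → M) :
    ∑ t ∈ Finset.range n, f ((t+1) % n) = ∑ t ∈ Finset.range n, f t := by
  obtain ⟨m, rfl⟩ : ∃ m, n = m + 1 := ⟨n - 1, by omega⟩
  rw [Finset.sum_range_succ]
  rw [show ((m + 1) % (m+1)) = 0 from Nat.mod_self _]
  have hcg : ∀ t ∈ Finset.range m, f ((t+1) % (m+1)) = f (t+1) := by
    intro t ht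
    rw [Nat.mod_eq_of_lt (by simpa using Finset.mem_range.mp ht)]
  rw [Finset.sum_congr rfl hcg]
  exact (Finset.sum_range_succ' f m).symm

lemma sum_rotk {M : Type*} [AddCommMonoid M] (c : ℕ → M) (hd0 : 1 ≤ d) (k : ℕ) :
    ∑ t ∈ Finset.range d, c ((t + k) % d) = ∑ t ∈ Finset.range d, c t := by
  induction k with
  | zero =>
    apply Finset.sum_congr rfl
    intro t ht
    rw [Nat.add_zero, Nat.mod_eq_of_lt (Finset.mem_range.mp ht)]
  | succ k ih =>
    have step : ∀ t ∈ Finset.range d, c ((t + (k+1)) % d) = (fun s => c ((s + k) % d)) ((t+1) % d) := by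
      intro t ht
      show c ((t + (k+1)) % d) = c (((t+1) % d + k) % d)
      congr 1
      rw [Nat.mod_add_mod]
      congr 1
      omega
    rw [Finset.sum_congr rfl step, sum_rot1_aux d hd0 (fun s => c ((s + k) % d))]
    exact ih

end Cfg

lemma addeq_fst {a b w : ℤ × ℤ} {e : ℤ} (h : a + b = e • w) : a.1 + b.1 = e * w.1 := by
  have := congrArg Prod.fst h; simpa using this

lemma addeq_snd {a b w : ℤ × ℤ} {e : ℤ} (h : a + b = e • w) : a.2 + b.2 = e * w.2 := by
  have := congrArg Prod.snd h; simpa using this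

lemma addeq_fst' {a b w : ℤ × ℤ} (h : a + b = w) : a.1 + b.1 = w.1 := by
  have := congrArg Prod.fst h; simpa using this

lemma addeq_snd' {a b w : ℤ × ℤ} (h : a + b = w) : a.2 + b.2 = w.2 := by
  have := congrArg Prod.snd h; simpa using this

namespace Cfg

variable {d : ℕ} (C : Cfg d)

/-- blow-down: delete the ray of index 1, assuming `v 0 + v 2 = v 1`. -/
noncomputable def del (hd5 : 5 ≤ d) (h1 : C.v 0 + C.v 2 = C.v 1) : Cfg (d-1) where
  v := fun t => if t = 0 then C.v 0 else C.v (t+1)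
  r := fun t => if t = 0 then C.r 0 else C.r (t+1)
  θ := fun t => if t = 0 then C.θ 0 else C.θ (t+1)
  hd := by omega
  hinj := by
    intro i hi j hj hv
    by_cases hi0 : i = 0 <;> by_cases hj0 : j = 0
    · omega
    · rw [if_pos hi0, if_neg hj0] at hv
      have := C.hinj 0 (by omega) (j+1) (by omega) hv
      omega
    · rw [if_neg hi0, if_pos hj0] at hv
      have := C.hinj (i+1) (by omega) 0 (by omega) hv
      omega
    · rw [if_neg hi0, if_neg hj0] at hv
      have := C.hinj (i+1) (by omega) (j+1) (by omega) hv
      omega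
  hprim := by
    intro i hi
    by_cases hi0 : i = 0
    · rw [if_pos hi0]; exact C.hprim 0 (by omega)
    · rw [if_neg hi0]; exact C.hprim (i+1) (by omega)
  hr := by
    intro i hi
    by_cases hi0 : i = 0
    · rw [if_pos hi0]; exact C.hr 0 (by omega)
    · rw [if_neg hi0]; exact C.hr (i+1) (by omega)
  hpolar := by
    intro i hi
    by_cases hi0 : i = 0
    · rw [if_pos hi0, if_pos hi0, if_pos hi0]; exact C.hpolar 0 (by omega)
    · rw [if_neg hi0, if_neg hi0, if_neg hi0]; exact C.hpolar (i+1) (by omega)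
  hccw := by
    intro i j hij hj
    have hj0 : j ≠ 0 := by omega
    rw [if_neg hj0]
    by_cases hi0 : i = 0
    · rw [if_pos hi0]; exact C.hccw 0 (j+1) (by omega) (by omega)
    · rw [if_neg hi0]; exact C.hccw (i+1) (j+1) (by omega) (by omega)
  hwind := by
    intro i hi j hj
    by_cases hi0 : i = 0 <;> by_cases hj0 : j = 0
    · rw [if_pos hi0, if_pos hj0]; exact C.hwind 0 (by omega) 0 (by omega)
    · rw [if_pos hi0, if_neg hj0]; exact C.hwind 0 (by omega) (j+1) (by omega)
    · rw [if_neg hi0, if_pos hj0]; exact C.hwind (i+1) (by omega) 0 (by omega)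
    · rw [if_neg hi0, if_neg hj0]; exact C.hwind (i+1) (by omega) (j+1) (by omega)
  hdet := by
    intro t ht
    by_cases ht0 : t = 0
    · subst ht0
      rw [if_pos rfl, if_neg (by omega : (0:ℕ) + 1 ≠ 0)]
      have hdet0 := C.hdet 0 (by omega)
      simp only [Dt] at hdet0 ⊢
      have hx := addeq_fst' h1
      have hy := addeq_snd' h1
      linear_combination hdet0 + (C.v 0).1 * hy - (C.v 0).2 * hx
    · rw [if_neg ht0, if_neg (by omega : t + 1 ≠ 0)]
      exact C.hdet (t+1) (by omega)
  hdetw := by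
    rw [if_neg (by omega : d - 1 - 1 ≠ 0), if_pos rfl,
      show d - 1 - 1 + 1 = d - 1 from by omega]
    exact C.hdetw

lemma del_rel {c : ℕ → ℤ} (hd5 : 5 ≤ d) (h1 : C.v 0 + C.v 2 = C.v 1) (h : CRel C c) :
    CRel (C.del hd5 h1) (fun t => if t = 0 then c 0 - 1 else if t = 1 then c 2 - 1 else c (t+1)) := by
  have hx1 := addeq_fst' h1
  have hy1 := addeq_snd' h1
  refine ⟨?_, ?_, ?_⟩
  · intro t ht1 ht2
    by_cases ht : t = 1
    · subst ht
      show (if (0:ℕ) = 0 then C.v 0 else C.v (0+1)) + (if (2:ℕ) = 0 then C.v 0 else C.v (2+1)) =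
        (if (1:ℕ) = 0 then c 0 - 1 else if (1:ℕ) = 1 then c 2 - 1 else c (1+1)) •
          (if (1:ℕ) = 0 then C.v 0 else C.v (1+1))
      rw [if_pos rfl, if_neg (by omega : (2:ℕ) ≠ 0), if_neg (by omega : (1:ℕ) ≠ 0),
        if_neg (by omega : (1:ℕ) ≠ 0), if_pos rfl]
      have h2 := h.1 2 (by omega) (by omega)
      rw [show (2:ℕ) - 1 = 1 from rfl] at h2
      have hx2 := addeq_fst h2
      have hy2 := addeq_snd h2
      apply prod_eq
      · simp only [Prod.fst_add, Prod.smul_fst, smul_eq_mul]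
        linear_combination hx2 + hx1
      · simp only [Prod.snd_add, Prod.smul_snd, smul_eq_mul]
        linear_combination hy2 + hy1
    · -- t ≥ 2
      show (if t - 1 = 0 then C.v 0 else C.v (t-1+1)) + (if t + 1 = 0 then C.v 0 else C.v (t+1+1)) =
        (if t = 0 then c 0 - 1 else if t = 1 then c 2 - 1 else c (t+1)) •
          (if t = 0 then C.v 0 else C.v (t+1))
      rw [if_neg (by omega : t - 1 ≠ 0), if_neg (by omega : t + 1 ≠ 0), if_neg (by omega : t ≠ 0),
        show t - 1 + 1 = t from by omega, if_neg (by omega : t ≠ 0), if_neg ht]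
      have hh := h.1 (t+1) (by omega) (by omega)
      rw [show t + 1 - 1 = t from rfl] at hh
      exact hh
  · show (if d - 1 - 1 = 0 then C.v 0 else C.v (d-1-1+1)) + (if (1:ℕ) = 0 then C.v 0 else C.v (1+1)) =
      (if (0:ℕ) = 0 then c 0 - 1 else if (0:ℕ) = 1 then c 2 - 1 else c (0+1)) •
        (if (0:ℕ) = 0 then C.v 0 else C.v (0+1))
    rw [if_neg (by omega : d - 1 - 1 ≠ 0), if_neg (by omega : (1:ℕ) ≠ 0), if_pos rfl, if_pos rfl,
      show d - 1 - 1 + 1 = d - 1 from by omega]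
    have h21 := h.2.1
    have hx2 := addeq_fst h21
    have hy2 := addeq_snd h21
    apply prod_eq
    · simp only [Prod.fst_add, Prod.smul_fst, smul_eq_mul]
      linear_combination hx2 + hx1
    · simp only [Prod.snd_add, Prod.smul_snd, smul_eq_mul]
      linear_combination hy2 + hy1
  · show (if d - 1 - 2 = 0 then C.v 0 else C.v (d-1-2+1)) + (if (0:ℕ) = 0 then C.v 0 else C.v (0+1)) =
      (if d - 1 - 1 = 0 then c 0 - 1 else if d - 1 - 1 = 1 then c 2 - 1 else c (d-1-1+1)) •
        (if d - 1 - 1 = 0 then C.v 0 else C.v (d-1-1+1))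
    rw [if_neg (by omega : d - 1 - 2 ≠ 0), if_pos rfl, if_neg (by omega : d - 1 - 1 ≠ 0),
      show d - 1 - 2 + 1 = d - 2 from by omega,
      if_neg (by omega : d - 1 - 1 ≠ 0), if_neg (by omega : d - 1 - 1 ≠ 1),
      show d - 1 - 1 + 1 = d - 1 from by omega]
    exact h.2.2

lemma del_sum {c : ℕ → ℤ} (hd5 : 5 ≤ d) (hc1 : c 1 = 1) :
    ∑ t ∈ Finset.range (d-1), (if t = 0 then c 0 - 1 else if t = 1 then c 2 - 1 else c (t+1)) =
      (∑ t ∈ Finset.range d, c t) - 3 := by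
  have e1 : ∑ t ∈ Finset.range (d-1), (if t = 0 then c 0 - 1 else if t = 1 then c 2 - 1 else c (t+1)) =
      ∑ t ∈ Finset.Ico 0 2, (if t = 0 then c 0 - 1 else if t = 1 then c 2 - 1 else c (t+1)) +
      ∑ t ∈ Finset.Ico 2 (d-1), (if t = 0 then c 0 - 1 else if t = 1 then c 2 - 1 else c (t+1)) := by
    rw [Finset.range_eq_Ico, ← Finset.sum_Ico_consecutive _ (by omega : (0:ℕ) ≤ 2) (by omega : 2 ≤ d - 1)]
  have e2 : ∑ t ∈ Finset.Ico 0 2, (if t = 0 then c 0 - 1 else if t = 1 then c 2 - 1 else c (t+1)) =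
      (c 0 - 1) + (c 2 - 1) := by
    rw [← Finset.range_eq_Ico]
    rw [Finset.sum_range_succ, Finset.sum_range_one]
    norm_num
  have e3 : ∑ t ∈ Finset.Ico 2 (d-1), (if t = 0 then c 0 - 1 else if t = 1 then c 2 - 1 else c (t+1)) =
      ∑ t ∈ Finset.Ico 2 (d-1), c (t+1) := by
    apply Finset.sum_congr rfl
    intro t ht
    have := Finset.mem_Ico.mp ht
    rw [if_neg (by omega), if_neg (by omega)]
  have e4 : ∑ t ∈ Finset.Ico 2 (d-1), c (t+1) = ∑ t ∈ Finset.Ico 3 d, c t := by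
    rw [Finset.sum_Ico_eq_sum_range, Finset.sum_Ico_eq_sum_range]
    have : d - 1 - 2 = d - 3 := by omega
    rw [this]
    apply Finset.sum_congr rfl
    intro t _
    congr 1
    omega
  have e5 : ∑ t ∈ Finset.range d, c t = (c 0 + c 1 + c 2) + ∑ t ∈ Finset.Ico 3 d, c t := by
    rw [Finset.range_eq_Ico, ← Finset.sum_Ico_consecutive _ (by omega : (0:ℕ) ≤ 3) (by omega : 3 ≤ d)]
    congr 1
    rw [← Finset.range_eq_Ico]
    rw [Finset.sum_range_succ, Finset.sum_range_succ, Finset.sum_range_one]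
  rw [e1, e2, e3, e4]
  rw [e5, hc1]
  ring

end Cfg

/-- sin is nonpositive on [π, 2π) -/
lemma sin_nonpos_of (x : ℝ) (h1 : π ≤ x) (h2 : x < 2 * π) : Real.sin x ≤ 0 := by
  have h3 : Real.sin (x - π) ≥ 0 :=
    Real.sin_nonneg_of_nonneg_of_le_pi (by linarith) (by linarith)
  have h4 : Real.sin (x - π) = - Real.sin x := by
    rw [Real.sin_sub, Real.sin_pi, Real.cos_pi]; ring
  linarith

namespace Cfg

variable {d : ℕ} (C : Cfg d)

/-- turning angles -/
noncomputable def Bf : ℕ → ℝ := fun t =>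
  if t + 1 < d then C.θ (t+1) - C.θ t else C.θ 0 + 2*π - C.θ (d-1)

lemma Bf_pos (t : ℕ) (ht : t < d) : 0 < C.Bf t := by
  unfold Bf
  split
  · have := C.hccw t (t+1) (by omega) ‹_›
    linarith
  · have := C.hwind (d-1) (by have := C.hd; omega) 0 (by have := C.hd; omega)
    linarith

lemma Bf_sum : ∑ t ∈ Finset.range d, C.Bf t = 2 * π := by
  have hd3 := C.hd
  have hsucc := Finset.sum_range_succ C.Bf (d-1)
  rw [show d - 1 + 1 = d from by omega] at hsucc
  rw [hsucc]
  have hcg : ∀ t ∈ Finset.range (d-1), C.Bf t = C.θ (t+1) - C.θ t := by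
    intro t ht
    have := Finset.mem_range.mp ht
    unfold Bf
    rw [if_pos (by omega)]
  rw [Finset.sum_congr rfl hcg, Finset.sum_range_sub C.θ (d-1)]
  have : C.Bf (d-1) = C.θ 0 + 2*π - C.θ (d-1) := by
    unfold Bf
    rw [if_neg (by omega)]
  rw [this]
  ring

lemma exists_pos_c {c : ℕ → ℤ} (h : CRel C c) (hd5 : 5 ≤ d) : ∃ s, s < d ∧ 1 ≤ c s := by
  by_contra hcon
  push_neg at hcon
  have hd3 := C.hd
  have hpi := Real.pi_pos
  have hkey : ∀ t, t < d → π ≤ C.Bf ((t + (d-1)) % d) + C.Bf t := by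
    intro t ht
    by_contra hlt
    push_neg at hlt
    have hc1 : 1 ≤ c t → False := by
      intro h1
      have := hcon t ht
      omega
    apply hc1
    rcases Nat.eq_zero_or_pos t with ht0 | ht0
    · -- t = 0
      subst ht0
      rw [show (0 + (d-1)) % d = d - 1 from by
        rw [Nat.zero_add]; exact Nat.mod_eq_of_lt (by omega)] at hlt
      have hB1 : C.Bf (d-1) = C.θ 0 + 2*π - C.θ (d-1) := by
        unfold Bf; rw [if_neg (by omega)]
      have hB0 : C.Bf 0 = C.θ 1 - C.θ 0 := by
        unfold Bf; rw [if_pos (by omega)]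
      rw [hB1, hB0] at hlt
      have hp1 := C.Bf_pos (d-1) (by omega)
      have hp0 := C.Bf_pos 0 (by omega)
      rw [hB1] at hp1; rw [hB0] at hp0
      have hsin : 0 < Real.sin (C.θ 1 - C.θ (d-1)) := by
        rw [show C.θ 1 - C.θ (d-1) = (C.θ 1 - C.θ (d-1) + 2*π) - 2*π from by ring,
          Real.sin_sub_two_pi]
        apply Real.sin_pos_of_pos_of_lt_pi <;> linarith
      have hD := C.D_pos_of_sin (d-1) 1 (by omega) (by omega) hsin
      rw [C.cD0 h]
      exact hD
    · rcases Nat.lt_or_ge t (d-1) with htd | htd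
      · -- middle
        rw [show (t + (d-1)) % d = t - 1 from by
          rw [show t + (d-1) = (t-1) + d from by omega]; rw [Nat.add_mod_right];
          exact Nat.mod_eq_of_lt (by omega)] at hlt
        have hBa : C.Bf (t-1) = C.θ t - C.θ (t-1) := by
          unfold Bf; rw [if_pos (by omega), show t - 1 + 1 = t from by omega]
        have hBt : C.Bf t = C.θ (t+1) - C.θ t := by
          unfold Bf; rw [if_pos (by omega)]
        rw [hBa, hBt] at hlt
        have hsin : 0 < Real.sin (C.θ (t+1) - C.θ (t-1)) := by
          apply Real.sin_pos_of_pos_of_lt_pi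
          · have := C.hccw (t-1) (t+1) (by omega) (by omega)
            linarith
          · linarith
        have hD := C.D_pos_of_sin (t-1) (t+1) (by omega) (by omega) hsin
        rw [C.cD_mid h t (by omega) (by omega)]
        exact hD
      · -- t = d - 1
        have htd1 : t = d - 1 := by omega
        subst htd1
        rw [show (d - 1 + (d-1)) % d = d - 2 from by
          rw [show d - 1 + (d-1) = (d-2) + d from by omega, Nat.add_mod_right];
          exact Nat.mod_eq_of_lt (by omega)] at hlt
        have hBa : C.Bf (d-2) = C.θ (d-1) - C.θ (d-2) := by
          unfold Bf; rw [if_pos (by omega), show d - 2 + 1 = d - 1 from by omega]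
        have hBt : C.Bf (d-1) = C.θ 0 + 2*π - C.θ (d-1) := by
          unfold Bf; rw [if_neg (by omega)]
        rw [hBa, hBt] at hlt
        have hp1 := C.Bf_pos (d-2) (by omega)
        have hp0 := C.Bf_pos (d-1) (by omega)
        rw [hBa] at hp1; rw [hBt] at hp0
        have hsin : 0 < Real.sin (C.θ 0 - C.θ (d-2)) := by
          rw [show C.θ 0 - C.θ (d-2) = (C.θ 0 - C.θ (d-2) + 2*π) - 2*π from by ring,
            Real.sin_sub_two_pi]
          apply Real.sin_pos_of_pos_of_lt_pi <;> linarith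
        have hD := C.D_pos_of_sin (d-2) 0 (by omega) (by omega) hsin
        rw [C.cDlast h]
        exact hD
  -- sum up
  have hsum : ∑ t ∈ Finset.range d, (C.Bf ((t + (d-1)) % d) + C.Bf t) = 4 * π := by
    rw [Finset.sum_add_distrib, sum_rotk (d := d) C.Bf (by omega) (d-1), C.Bf_sum]
    ring
  have hge : (d : ℝ) * π ≤ ∑ t ∈ Finset.range d, (C.Bf ((t + (d-1)) % d) + C.Bf t) := by
    have := Finset.card_nsmul_le_sum (Finset.range d)
      (fun t => C.Bf ((t + (d-1)) % d) + C.Bf t) π (fun t ht => hkey t (Finset.mem_range.mp ht))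
    rw [Finset.card_range] at this
    rwa [nsmul_eq_mul] at this
  rw [hsum] at hge
  have hd5' : (5 : ℝ) ≤ (d : ℝ) := by exact_mod_cast hd5
  nlinarith

end Cfg

namespace Cfg

variable {d : ℕ} (C : Cfg d)

lemma chainA {c : ℕ → ℤ} (h : CRel C c) (k : ℕ) (hk3 : 3 ≤ k) (hkd : k ≤ d - 1)
    (hanti : C.v k = - C.v 0) (hn1 : ∀ t, t < d → c t ≠ 1) : False := by
  have hd3 := C.hd
  have hDk : Dt (C.v 0) (C.v k) = 0 := by
    rw [hanti, Dt_neg_right, Dt_self]; ring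
  have hsin := C.sin_zero_of_D 0 k (by omega) (by omega) hDk
  obtain ⟨hθ1, hθ2⟩ := C.theta_diff 0 k (by omega) (by omega)
  have hθk : C.θ k - C.θ 0 = π := eq_pi_of_sin_zero _ hθ1 hθ2 hsin
  apply Z1 k (fun t => Dt (C.v 0) (C.v t)) c hk3
  · exact Dt_self _
  · exact C.hdet 0 (by omega)
  · intro t h1 h2
    exact Dt_rec (C.v 0) _ _ _ _ (h.1 t h1 (by omega))
  · intro t h1 h2
    apply C.D_pos_of_sin 0 t (by omega) (by omega)
    apply Real.sin_pos_of_pos_of_lt_pi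
    · have := C.hccw 0 t (by omega) (by omega)
      linarith
    · have := C.hccw t k (by omega) (by omega)
      linarith
  · exact hDk
  · intro t h1 h2
    exact hn1 t (by omega)

lemma caseA {c : ℕ → ℤ} (h : CRel C c) (hd5 : 5 ≤ d) (a b : ℕ) (ha : a < d) (hb : b < d)
    (hanti : C.v b = - C.v a) (hn1 : ∀ t, t < d → c t ≠ 1) : False := by
  have hd3 := C.hd
  have hab : a ≠ b := by
    intro hh
    subst hh
    have h1 : (C.v a).1 = -(C.v a).1 := by
      have := congrArg Prod.fst hanti; simpa using this
    have h2 : (C.v a).2 = -(C.v a).2 := by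
      have := congrArg Prod.snd hanti; simpa using this
    have := C.hprim a ha
    have e1 : (C.v a).1 = 0 := by omega
    have e2 : (C.v a).2 = 0 := by omega
    rw [e1, e2] at this
    simp at this
  set W := C.rotk a with hW
  have hrelW := C.rel_rotk h a
  have hn1W : ∀ t, t < d → c ((t + a) % d) ≠ 1 := by
    intro t ht
    exact hn1 _ (Nat.mod_lt _ (by omega))
  set e := if a < b then b - a else d - (a - b) with he
  have hea : (e + a) % d = b := by
    split_ifs at he with hcase
    · rw [he, show b - a + a = b from by omega]
      exact Nat.mod_eq_of_lt hb
    · rw [he, show d - (a - b) + a = d + b from by omega, Nat.add_mod_left]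
      exact Nat.mod_eq_of_lt hb
  have he1 : 1 ≤ e := by split_ifs at he with hcase <;> omega
  have hed : e ≤ d - 1 := by split_ifs at he with hcase <;> omega
  have hWe : W.v e = - W.v 0 := by
    rw [hW, C.rotk_v a e (by omega), C.rotk_v a 0 (by omega), hea,
      show (0 + a) % d = a from by rw [Nat.zero_add]; exact Nat.mod_eq_of_lt ha]
    exact hanti
  rcases Nat.lt_or_ge e 3 with he3 | he3
  · -- e = 1 or 2
    rcases Nat.eq_or_lt_of_le he1 with he1' | he2
    · -- e = 1 : contradiction with det
      have hWe1 : W.v 1 = - W.v 0 := by rw [← he1'] at hWe; exact hWe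
      have hdet0 := W.hdet 0 (by omega)
      rw [show (0:ℕ) + 1 = 1 from rfl, hWe1, Dt_neg_right, Dt_self] at hdet0
      omega
    · -- e = 2 : rotate once more
      have he2' : e = 2 := by omega
      set W2 := W.rotk e with hW2
      have hrelW2 := W.rel_rotk hrelW e
      have hW20 : W2.v 0 = W.v e := by
        rw [hW2, W.rotk_v e 0 (by omega),
          show (0 + e) % d = e from by rw [Nat.zero_add]; exact Nat.mod_eq_of_lt (by omega)]
      have hW2de : W2.v (d - e) = W.v 0 := by
        rw [hW2, W.rotk_v e (d - e) (by omega),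
          show (d - e + e) % d = 0 from by rw [show d - e + e = d from by omega]; exact Nat.mod_self d]
      have hanti2 : W2.v (d - e) = - W2.v 0 := by
        rw [hW2de, hW20, hWe]
        simp
      apply W2.chainA hrelW2 (d - e) (by omega) (by omega) hanti2
      intro t ht
      exact hn1W _ (Nat.mod_lt _ (by omega))
  · exact W.chainA hrelW e he3 hed hWe hn1W

lemma caseB1 {c : ℕ → ℤ} (h : CRel C c) (hd5 : 5 ≤ d) (hc1 : 2 ≤ c 1)
    (hn01 : ∀ t, t < d → c t ≠ 0 ∧ c t ≠ 1)
    (hNA : ∀ a, a < d → ∀ b, b < d → C.v b ≠ - C.v a) : False := by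
  classical
  have hd3 := C.hd
  have hpi := Real.pi_pos
  have hcD : c 1 = Dt (C.v 0) (C.v 2) := by
    have := C.cD_mid h 1 (le_refl _) (by omega)
    rwa [show (1:ℕ) - 1 = 0 from rfl] at this
  have h2pi : C.θ 2 - C.θ 0 < π :=
    C.theta_step 0 2 (by omega) (by omega) (by omega)
  have hDd1 : Dt (C.v 0) (C.v (d-1)) = -1 := by
    have := C.hdetw
    rw [Dt_skew] at this
    omega
  have hd1pi : π < C.θ (d-1) - C.θ 0 :=
    C.theta_step_gt 0 (d-1) (by omega) (by omega) (by omega)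
  set P : ℕ → Prop := fun t => C.θ t < C.θ 0 + π with hP
  set m := Nat.findGreatest P (d-1) with hm
  have hPm2 : P 2 := by rw [hP]; simp only; linarith
  have hm2 : 2 ≤ m := Nat.le_findGreatest (by omega) hPm2
  have hmle : m ≤ d - 1 := Nat.findGreatest_le _
  have hPm : P m := Nat.findGreatest_spec (show 2 ≤ d - 1 from by omega) hPm2
  have hnotPd1 : ¬ P (d-1) := by
    rw [hP]; simp only; push_neg; linarith
  have hmd2 : m ≤ d - 2 := by
    rcases Nat.lt_or_ge m (d-1) with h' | h'
    · omega
    · exfalso; apply hnotPd1; rw [show d - 1 = m from by omega]; exact hPm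
  have hgt : ∀ t, m < t → t ≤ d - 1 → ¬ P t := by
    intro t h1 h2 hPt
    exact Nat.findGreatest_is_greatest (hm ▸ h1) h2 hPt
  apply Z2 d m (fun t => Dt (C.v 0) (C.v (t % d))) c hd5 hm2 hmd2
  · rw [Nat.zero_mod]; exact Dt_self _
  · rw [Nat.mod_eq_of_lt (by omega : 1 < d)]
    exact C.hdet 0 (by omega)
  · rw [Nat.mod_eq_of_lt (by omega : 2 < d), ← hcD]
    exact hc1
  · intro t h1 h2
    rw [Nat.mod_eq_of_lt (by omega : t < d), Nat.mod_eq_of_lt (by omega : t - 1 < d)]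
    rcases Nat.lt_or_ge t (d-1) with h' | h'
    · rw [Nat.mod_eq_of_lt (by omega : t + 1 < d)]
      exact Dt_rec (C.v 0) _ _ _ _ (h.1 t h1 (by omega))
    · have ht : t = d - 1 := by omega
      subst ht
      rw [show (d - 1 + 1) % d = 0 from by
        rw [show d - 1 + 1 = d from by omega]; exact Nat.mod_self d]
      have := Dt_rec (C.v 0) _ _ _ _ h.2.2
      rwa [show d - 1 - 1 = d - 2 from by omega]
  · intro t h1 h2
    rw [Nat.mod_eq_of_lt (by omega : t < d)]
    apply C.D_pos_of_sin 0 t (by omega) (by omega)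
    apply Real.sin_pos_of_pos_of_lt_pi
    · have := C.hccw 0 t (by omega) (by omega)
      linarith
    · have hle : C.θ t ≤ C.θ m := by
        rcases Nat.eq_or_lt_of_le h2 with h' | h'
        · rw [h']
        · have := C.hccw t m h' (by omega)
          linarith
      have : C.θ m < C.θ 0 + π := hPm
      linarith
  · intro t h1 h2
    rw [Nat.mod_eq_of_lt (by omega : t < d)]
    have hnP := hgt t (by omega) h2
    rw [hP] at hnP
    simp only at hnP
    push_neg at hnP
    have hsin : Real.sin (C.θ t - C.θ 0) ≤ 0 := by
      apply sin_nonpos_of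
      · linarith
      · exact (C.theta_diff 0 t (by omega) (by omega)).2
    have hle := C.D_nonpos_of_sin 0 t (by omega) (by omega) hsin
    have hne : Dt (C.v 0) (C.v t) ≠ 0 := by
      intro h0
      have := C.antipodal_of_det_zero 0 t (by omega) (by omega) (by omega) h0
      exact hNA 0 (by omega) t (by omega) this
    omega
  · rw [Nat.mod_eq_of_lt (by omega : d - 1 < d)]
    exact hDd1
  · rw [Nat.mod_self]; exact Dt_self _
  · intro t h1 h2
    exact hn01 t (by omega)

lemma caseB {c : ℕ → ℤ} (h : CRel C c) (hd5 : 5 ≤ d) (hn1 : ∀ t, t < d → c t ≠ 1)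
    (hNA : ∀ a, a < d → ∀ b, b < d → C.v b ≠ - C.v a) : False := by
  have hd3 := C.hd
  have hn0 : ∀ t, t < d → c t ≠ 0 := by
    intro t ht hc0
    rcases Nat.eq_zero_or_pos t with ht0 | ht0
    · subst ht0
      have h21 := h.2.1
      rw [hc0, zero_smul] at h21
      have : C.v 1 = - C.v (d-1) := by
        have := eq_neg_of_add_eq_zero_right h21
        exact this
      exact hNA (d-1) (by omega) 1 (by omega) this
    · rcases Nat.lt_or_ge t (d-1) with htd | htd
      · have hmid := h.1 t (by omega) (by omega)
        rw [hc0, zero_smul] at hmid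
        have : C.v (t+1) = - C.v (t-1) := eq_neg_of_add_eq_zero_right hmid
        exact hNA (t-1) (by omega) (t+1) (by omega) this
      · have ht1 : t = d - 1 := by omega
        subst ht1
        have hlast := h.2.2
        rw [hc0, zero_smul] at hlast
        have : C.v 0 = - C.v (d-2) := eq_neg_of_add_eq_zero_right hlast
        exact hNA (d-2) (by omega) 0 (by omega) this
  obtain ⟨s, hs, hcs⟩ := C.exists_pos_c h hd5
  have hcs2 : 2 ≤ c s := by
    have := hn1 s hs
    omega
  set k := if s = 0 then d - 1 else s - 1 with hk
  have hkd : k < d := by split_ifs at hk <;> omega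
  have hk1 : (1 + k) % d = s := by
    split_ifs at hk with hcase
    · rw [hk, show 1 + (d-1) = d from by omega, Nat.mod_self, hcase]
    · rw [hk, show 1 + (s - 1) = s from by omega]
      exact Nat.mod_eq_of_lt hs
  set W := C.rotk k with hW
  have hrelW := C.rel_rotk h k
  apply W.caseB1 hrelW hd5
  · show 2 ≤ c ((1 + k) % d)
    rw [hk1]
    exact hcs2
  · intro t ht
    constructor
    · exact hn0 _ (Nat.mod_lt _ (by omega))
    · exact hn1 _ (Nat.mod_lt _ (by omega))
  · intro a ha b hb hab
    rw [hW, C.rotk_v k a ha, C.rotk_v k b hb] at hab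
    exact hNA _ (Nat.mod_lt _ (by omega)) _ (Nat.mod_lt _ (by omega)) hab

lemma exists_one {c : ℕ → ℤ} (h : CRel C c) (hd5 : 5 ≤ d) : ∃ i, i < d ∧ c i = 1 := by
  by_contra hcon
  push_neg at hcon
  by_cases hA : ∃ a, a < d ∧ ∃ b, b < d ∧ C.v b = - C.v a
  · obtain ⟨a, ha, b, hb, hab⟩ := hA
    exact C.caseA h hd5 a b ha hb hab hcon
  · push_neg at hA
    exact C.caseB h hd5 hcon (fun a ha b hb => hA a ha b hb)

end Cfg

theorem core_sum (d : ℕ) (C : Cfg d) (c : ℕ → ℤ) (h : CRel C c) :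
    ∑ t ∈ Finset.range d, c t = 3 * (d:ℤ) - 12 := by
  induction d using Nat.strong_induction_on generalizing c with
  | _ d ih =>
  have hd3 := C.hd
  by_cases h3 : d = 3
  · subst h3
    have hc1 : c 1 = -1 := by
      have := C.cD_mid h 1 (le_refl _) (by omega)
      rw [show (1:ℕ) - 1 = 0 from rfl, show (1:ℕ) + 1 = 2 from rfl] at this
      have hw := C.hdetw
      rw [show (3:ℕ) - 1 = 2 from rfl] at hw
      rw [Dt_skew] at this
      omega
    have hc0 : c 0 = -1 := by
      have := C.cD0 h
      rw [show (3:ℕ) - 1 = 2 from rfl] at this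
      have hw := C.hdet 1 (by omega)
      rw [show (1:ℕ) + 1 = 2 from rfl] at hw
      rw [Dt_skew] at this
      omega
    have hc2 : c 2 = -1 := by
      have := C.cDlast h
      rw [show (3:ℕ) - 1 = 2 from rfl, show (3:ℕ) - 2 = 1 from rfl] at this
      have hw := C.hdet 0 (by omega)
      rw [show (0:ℕ) + 1 = 1 from rfl] at hw
      rw [Dt_skew] at this
      omega
    rw [Finset.sum_range_succ, Finset.sum_range_succ, Finset.sum_range_one, hc0, hc1, hc2]
    norm_num
  by_cases h4 : d = 4
  · subst h4
    have e1 : c 1 = Dt (C.v 0) (C.v 2) := by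
      have := C.cD_mid h 1 (le_refl _) (by omega)
      rwa [show (1:ℕ) - 1 = 0 from rfl, show (1:ℕ) + 1 = 2 from rfl] at this
    have e3 : c 3 = Dt (C.v 2) (C.v 0) := by
      have := C.cDlast h
      rwa [show (4:ℕ) - 1 = 3 from rfl, show (4:ℕ) - 2 = 2 from rfl] at this
    have e2 : c 2 = Dt (C.v 1) (C.v 3) := by
      have := C.cD_mid h 2 (by omega) (by omega)
      rwa [show (2:ℕ) - 1 = 1 from rfl, show (2:ℕ) + 1 = 3 from rfl] at this
    have e0 : c 0 = Dt (C.v 3) (C.v 1) := by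
      have := C.cD0 h
      rwa [show (4:ℕ) - 1 = 3 from rfl] at this
    have s13 : Dt (C.v 2) (C.v 0) = - Dt (C.v 0) (C.v 2) := by rw [Dt_skew]
    have s02 : Dt (C.v 3) (C.v 1) = - Dt (C.v 1) (C.v 3) := by rw [Dt_skew]
    rw [Finset.sum_range_succ, Finset.sum_range_succ, Finset.sum_range_succ,
      Finset.sum_range_one]
    rw [e0, e1, e2, e3, s13, s02]
    norm_num
  · -- d ≥ 5 : blow down
    have hd5 : 5 ≤ d := by omega
    obtain ⟨i, hi, hci⟩ := C.exists_one h hd5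
    set k := (i + (d-1)) % d with hk
    have hkd : k < d := Nat.mod_lt _ (by omega)
    set W := C.rotk k with hW
    have hrelW := C.rel_rotk h k
    have hk1 : (1 + k) % d = i := by
      rw [hk, Nat.add_comm 1 _, Nat.mod_add_mod, show i + (d-1) + 1 = i + d from by omega,
        Nat.add_mod_right]
      exact Nat.mod_eq_of_lt hi
    have hcW1 : c ((1 + k) % d) = 1 := by rw [hk1]; exact hci
    have h1W : W.v 0 + W.v 2 = W.v 1 := by
      have hh : (C.rotk k).v 0 + (C.rotk k).v 2 = c ((1 + k) % d) • (C.rotk k).v 1 :=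
        hrelW.1 1 (le_refl _) (by omega)
      rw [hcW1, one_smul] at hh
      rw [hW]
      exact hh
    have hrelD := W.del_rel hd5 h1W hrelW
    have hIH := ih (d-1) (by omega) (W.del hd5 h1W) _ hrelD
    have hdel := Cfg.del_sum (d := d) (c := fun t => c ((t + k) % d)) hd5 hcW1
    have hrot := Cfg.sum_rotk (d := d) c (by omega) k
    rw [hdel, hrot] at hIH
    have hcast : ((d - 1 : ℕ) : ℤ) = (d : ℤ) - 1 := by
      have : (1:ℕ) ≤ d := by omega
      push_cast [Nat.cast_sub this]
      ring
    rw [hcast] at hIH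
    linarith

open Fin.NatCast

/-- Let `v₁, …, v_d ∈ ℤ²` (`d ≥ 3`) be pairwise distinct primitive vectors in strictly
counterclockwise cyclic order with total turning one full revolution (encoded by the polar
data `r, θ` with `θ` strictly increasing and spanning less than `2π`), such that
`det(vᵢ, vᵢ₊₁) = 1` for all `i` (indices mod `d`).  Then for each `i` there is a unique
integer `cᵢ` with `vᵢ₋₁ + vᵢ₊₁ = cᵢ • vᵢ`, and `∑ cᵢ = 3d - 12`. -/
theorem stmt4 (d : ℕ) [NeZero d] (hd : 3 ≤ d) (v : Fin d → ℤ × ℤ)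
    (hinj : Function.Injective v)
    (hprim : ∀ i, Int.gcd (v i).1 (v i).2 = 1)
    (r θ : Fin d → ℝ) (hr : ∀ i, 0 < r i)
    (hpolar : ∀ i, ((v i).1 : ℝ) = r i * Real.cos (θ i) ∧
        ((v i).2 : ℝ) = r i * Real.sin (θ i))
    (hccw : StrictMono θ)
    (hwind : ∀ i j, θ i - θ j < 2 * Real.pi)
    (hdet : ∀ i : Fin d, (v i).1 * (v (i + 1)).2 - (v i).2 * (v (i + 1)).1 = 1) :
    (∀ i : Fin d, ∃! c : ℤ, v (i - 1) + v (i + 1) = c • v i) ∧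
      (∀ c : Fin d → ℤ, (∀ i, v (i - 1) + v (i + 1) = (c i) • v i) →
        ∑ i, c i = 3 * (d : ℤ) - 12) := by
  have hdetD : ∀ i : Fin d, Dt (v i) (v (i+1)) = 1 := fun i => hdet i
  have hcast : ∀ t : ℕ, t < d → (((t : Fin d) : ℕ)) = t := fun t ht => Fin.val_cast_of_lt ht
  have hsucc : ∀ t : ℕ, ((t+1 : ℕ) : Fin d) = (t : Fin d) + 1 := by
    intro t; push_cast; ring
  have hdcast : ((d : ℕ) : Fin d) = 0 := by simp
  have hd1cast : ((d - 1 : ℕ) : Fin d) + 1 = 0 := by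
    rw [← hsucc, show d - 1 + 1 = d from by omega, hdcast]
  constructor
  · -- uniqueness part
    intro i
    have h1 : Dt (v (i-1)) (v i) = 1 := by
      have := hdetD (i-1)
      rwa [sub_add_cancel] at this
    have h2 : Dt (v (i+1)) (v i) = -1 := by
      have := hdetD i
      rw [Dt_skew] at this
      omega
    have hz : Dt (v (i-1) + v (i+1)) (v i) = 0 := by
      simp only [Dt, Prod.fst_add, Prod.snd_add] at h1 h2 ⊢
      linarith
    obtain ⟨e, he⟩ := collinear_of_det_eq_zero (v i) _ (hprim i) hz
    refine ⟨e, he, ?_⟩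
    intro e' he'
    exact smul_cancel (v i) (ne_zero_of_prim _ (hprim i)) e' e (by rw [← he, ← he'])
  · -- sum part
    intro c hc
    -- build the Cfg
    set C : Cfg d := {
      v := fun t => v ((t : ℕ) : Fin d)
      r := fun t => r ((t : ℕ) : Fin d)
      θ := fun t => θ ((t : ℕ) : Fin d)
      hd := hd
      hinj := by
        intro i hi j hj hv
        have := hinj hv
        have hi' := hcast i hi
        have hj' := hcast j hj
        rw [← hi', ← hj', this]
      hprim := fun i _ => hprim _
      hr := fun i _ => hr _
      hpolar := fun i _ => hpolar _
      hccw := by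
        intro i j hij hj
        apply hccw
        rw [Fin.lt_def, hcast i (by omega), hcast j hj]
        exact hij
      hwind := fun i _ j _ => hwind _ _
      hdet := by
        intro t ht
        have := hdetD ((t : ℕ) : Fin d)
        rwa [← hsucc] at this
      hdetw := by
        have := hdetD ((d - 1 : ℕ) : Fin d)
        rwa [hd1cast, show ((0 : Fin d)) = ((0:ℕ) : Fin d) from by norm_num] at this
    } with hC
    have hrel : CRel C (fun t => c ((t : ℕ) : Fin d)) := by
      refine ⟨?_, ?_, ?_⟩
      · intro t h1 h2
        have := hc ((t : ℕ) : Fin d)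
        have hsub : ((t : Fin d)) - 1 = ((t - 1 : ℕ) : Fin d) := by
          have : ((t - 1 : ℕ) : Fin d) + 1 = ((t : ℕ) : Fin d) := by
            rw [← hsucc, show t - 1 + 1 = t from by omega]
          exact ((eq_sub_of_add_eq this).symm)
        rwa [hsub, ← hsucc] at this
      · have := hc ((0 : ℕ) : Fin d)
        have h01 : ((0:ℕ) : Fin d) = 0 := by norm_num
        have hsub : (0 : Fin d) - 1 = ((d - 1 : ℕ) : Fin d) := by
          exact ((eq_sub_of_add_eq hd1cast).symm)
        rw [h01] at this
        rwa [hsub, show (0 : Fin d) + 1 = ((1:ℕ) : Fin d) from by norm_num] at this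
      · have := hc ((d - 1 : ℕ) : Fin d)
        have hsub : ((d - 1 : ℕ) : Fin d) - 1 = ((d - 2 : ℕ) : Fin d) := by
          have : ((d - 2 : ℕ) : Fin d) + 1 = ((d - 1 : ℕ) : Fin d) := by
            rw [← hsucc, show d - 2 + 1 = d - 1 from by omega]
          exact ((eq_sub_of_add_eq this).symm)
        rwa [hsub, hd1cast, show ((0 : Fin d)) = ((0:ℕ) : Fin d) from by norm_num] at this
    have hsum := core_sum d C _ hrel
    have hfin : ∑ i : Fin d, c i = ∑ t ∈ Finset.range d, c ((t : ℕ) : Fin d) := by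
      rw [← Fin.sum_univ_eq_sum_range (fun t => c ((t : ℕ) : Fin d)) d]
      apply Finset.sum_congr rfl
      intro i _
      rw [Fin.cast_val_eq_self]
    rw [hfin, hsum]
end
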